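/- arXiv:1411.5121 — 9 statements merged into one kernel-verified Lean document; each statement's English description precedes it below -/
import Mathlib

section
/- Let f be a real number with 0 < f < 1/3, and let π : ℝ → ℝ be the rlm_dpl1_extreme_3a function. Then π is an extreme minimal valid function: π is a minimal valid function with parameter f, and whenever π = (π¹ + π²)/2 with π¹, π² minimal valid functions with parameter f, one has π¹ = π² = π. -/
/-- A minimal valid function for the Gomory–Johnson infinite group problem
with parameter `f`. -/
def MinimalValid (f : ℝ) (π : ℝ → ℝ) : Prop :=
  (∀ x, 0 ≤ π x) ∧ π 0 = 0 ∧ (∀ x, π (x + 1) = π x) ∧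
  (∀ x y, π (x + y) ≤ π x + π y) ∧ (∀ x, π x + π (f - x) = 1)

/-- The `rlm_dpl1_extreme_3a` function, periodic with period 1, defined via the
fractional part. -/
noncomputable def rlmDpl1Extreme3a (f : ℝ) : ℝ → ℝ := fun x =>
  let t := Int.fract x
  if t ≤ f then t / f
  else if t < (1 + f) / 2 then 2 * t / (1 + 2 * f)
  else if t = (1 + f) / 2 then 1 / 2
  else (2 * t - 1) / (1 + 2 * f)


set_option maxHeartbeats 1600000 in
lemma bounded_additive_linear {ε M : ℝ} (hε : 0 < ε) {e : ℝ → ℝ}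
    (hadd : ∀ x y : ℝ, |x| < ε → |y| < ε → |x + y| < ε → e (x + y) = e x + e y)
    (hbd : ∀ x, |x| < ε → |e x| ≤ M) :
    ∃ c : ℝ, ∀ x, |x| < ε → e x = c * x := by
  have h0ε : |(0:ℝ)| < ε := by simpa using hε
  have hM : 0 ≤ M := le_trans (abs_nonneg _) (hbd 0 h0ε)
  have e0 : e 0 = 0 := by
    have h := hadd 0 0 h0ε h0ε (by simpa using hε)
    simp at h; linarith
  have hodd : ∀ x, |x| < ε → e (-x) = - e x := by
    intro x hx
    have h := hadd x (-x) hx (by rwa [abs_neg]) (by simpa using hε)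
    simp at h; linarith
  have hnat : ∀ n : ℕ, ∀ x : ℝ, |x| < ε → |(n:ℝ) * x| < ε → e ((n:ℝ) * x) = n * e x := by
    intro n
    induction n with
    | zero => intro x _ _; simpa using e0
    | succ n ih =>
      intro x hx hnx
      have hcast : ((n+1:ℕ):ℝ) = (n:ℝ) + 1 := by push_cast; ring
      have hb : |(n:ℝ) * x| ≤ |((n:ℝ)+1) * x| := by
        rw [abs_mul, abs_mul, Nat.abs_cast, show |(n:ℝ)+1| = (n:ℝ)+1 by
          rw [abs_of_nonneg]; positivity]
        have := abs_nonneg x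
        nlinarith
      rw [hcast] at hnx ⊢
      have hnx' : |(n:ℝ) * x| < ε := lt_of_le_of_lt hb hnx
      have hsum : ((n:ℝ)+1) * x = (n:ℝ)*x + x := by ring
      rw [hsum, hadd _ _ hnx' hx (by rwa [← hsum]), ih x hx hnx']
      ring
  have hint : ∀ m : ℤ, ∀ x : ℝ, |x| < ε → |(m:ℝ) * x| < ε → e ((m:ℝ) * x) = m * e x := by
    intro m x hx hmx
    rcases le_or_gt 0 m with hm | hm
    · lift m to ℕ using hm
      exact_mod_cast hnat m x hx (by exact_mod_cast hmx)
    · have hm' : 0 ≤ -m := by omega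
      have hcast : (((-m).toNat : ℕ) : ℝ) = -(m:ℝ) := by
        exact_mod_cast congrArg (Int.cast : ℤ → ℝ) (Int.toNat_of_nonneg hm')
      have h1 : |((-m).toNat : ℝ) * x| < ε := by
        rw [hcast, show -(m:ℝ)*x = -((m:ℝ)*x) by ring, abs_neg]; exact hmx
      have h2 := hnat (-m).toNat x hx h1
      rw [hcast] at h2
      have h3 : -((m:ℝ)*x) = -(m:ℝ)*x := by ring
      have h4 := hodd ((m:ℝ)*x) hmx
      rw [h3] at h4
      rw [h4] at h2
      push_cast at h2 ⊢
      linarith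
  have hrat : ∀ q : ℚ, ∀ x : ℝ, |x| < ε → |(q:ℝ) * x| < ε → e ((q:ℝ) * x) = q * e x := by
    intro q x hx hqx
    have hden0 : (0:ℝ) < (q.den:ℝ) := by exact_mod_cast q.pos
    have hden1 : (1:ℝ) ≤ (q.den:ℝ) := by exact_mod_cast q.pos
    have hxden : |x / (q.den:ℝ)| < ε := by
      rw [abs_div, abs_of_pos hden0]
      exact lt_of_le_of_lt (div_le_self (abs_nonneg x) hden1) hx
    have hxrec : ((q.den:ℕ):ℝ) * (x / (q.den:ℝ)) = x := by
      field_simp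
    have hx_dec : e x = (q.den:ℝ) * e (x / (q.den:ℝ)) := by
      have := hnat q.den (x / (q.den:ℝ)) hxden (by rw [hxrec]; exact hx)
      rw [hxrec] at this; exact this
    have hqcast : (q:ℝ) * x = ((q.num:ℤ):ℝ) * (x / (q.den:ℝ)) := by
      rw [Rat.cast_def]; field_simp
    have hq_dec : e ((q:ℝ) * x) = (q.num:ℝ) * e (x / (q.den:ℝ)) := by
      rw [hqcast]
      exact hint q.num _ hxden (by rw [← hqcast]; exact hqx)
    rw [hq_dec, hx_dec, Rat.cast_def]
    field_simp
  have hsmall : ∀ x : ℝ, |x| < ε → |x| ≤ ε/4 → |e x| ≤ 4*M/ε * |x| := by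
    intro x hx hx4
    rcases eq_or_ne x 0 with rfl | hx0
    · simp [e0]
    · have habs0 : 0 < |x| := abs_pos.mpr hx0
      set n : ℕ := ⌊ε/(2*|x|)⌋₊ with hn
      have h2 : (2:ℝ) ≤ ε/(2*|x|) := by
        rw [le_div_iff₀ (by positivity)]; linarith
      have hn2 : 2 ≤ n := Nat.le_floor (by exact_mod_cast h2)
      have hnpos : (0:ℝ) < (n:ℝ) := by
        have : (2:ℝ) ≤ (n:ℝ) := by exact_mod_cast hn2
        linarith
      have hnx : (n:ℝ) * |x| ≤ ε/2 := by
        have hfl := Nat.floor_le (show (0:ℝ) ≤ ε/(2*|x|) by positivity)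
        calc (n:ℝ) * |x| ≤ (ε/(2*|x|)) * |x| :=
              mul_le_mul_of_nonneg_right hfl (abs_nonneg x)
          _ = ε/2 := by field_simp
      have h1 : |(n:ℝ) * x| < ε := by
        rw [abs_mul, Nat.abs_cast]; linarith
      have he : e ((n:ℝ) * x) = n * e x := hnat n x hx h1
      have hb : (n:ℝ) * |e x| ≤ M := by
        have := hbd _ h1
        rw [he, abs_mul, Nat.abs_cast] at this; exact this
      have hnlow : ε/(4*|x|) ≤ (n:ℝ) := by
        have hfl : ε/(2*|x|) - 1 < (n:ℝ) := by
          have := Nat.sub_one_lt_floor (ε/(2*|x|))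
          exact_mod_cast this
        have : ε/(4*|x|) ≤ ε/(2*|x|) - 1 := by
          have h4 : ε/(4*|x|) = (ε/(2*|x|))/2 := by
            rw [div_div]; congr 1; ring
          rw [h4]; linarith
        linarith
      have h5 : ε/(4*|x|) * |e x| ≤ (n:ℝ) * |e x| :=
        mul_le_mul_of_nonneg_right hnlow (abs_nonneg _)
      have h6 : ε/(4*|x|) * |e x| ≤ M := le_trans h5 hb
      have h7 : ε * |e x| ≤ M * (4*|x|) := by
        rw [div_mul_eq_mul_div, div_le_iff₀ (by positivity)] at h6
        linarith
      rw [show 4*M/ε * |x| = (4*M*|x|)/ε by ring, le_div_iff₀ hε]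
      nlinarith
  set x₀ : ℝ := ε/2 with hx₀
  have hx₀pos : 0 < x₀ := by positivity
  have hx₀abs : |x₀| < ε := by rw [abs_of_pos hx₀pos]; linarith
  set c : ℝ := e x₀ / x₀ with hc
  refine ⟨c, ?_⟩
  intro x hx
  set K : ℝ := 4*M/ε + |c| with hK
  have hK0 : 0 ≤ K := by positivity
  have key : ∀ η : ℝ, 0 < η → η ≤ ε/4 → |e x - c*x| ≤ K * η := by
    intro η hη hη4
    have hxx : -ε < x ∧ x < ε := abs_lt.mp hx
    have hlt : max (x/x₀ - η/x₀) (-2) < x/x₀ := by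
      apply max_lt
      · have : 0 < η/x₀ := by positivity
        linarith
      · rw [lt_div_iff₀ hx₀pos]; linarith [hxx.1]
    obtain ⟨q, hq1, hq2⟩ := exists_rat_btwn hlt
    have hq1a : x/x₀ - η/x₀ < (q:ℝ) := lt_of_le_of_lt (le_max_left _ _) hq1
    have hq1b : (-2:ℝ) < (q:ℝ) := lt_of_le_of_lt (le_max_right _ _) hq1
    set w : ℝ := x - (q:ℝ)*x₀ with hw
    have hw0 : 0 < w := by
      have : (q:ℝ)*x₀ < x := by
        rw [← lt_div_iff₀ hx₀pos] at *; linarith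
      linarith
    have hwη : w < η := by
      have h' : (x - η)/x₀ < (q:ℝ) := by rw [sub_div]; exact hq1a
      have h'' := (div_lt_iff₀ hx₀pos).mp h'
      rw [hw]; linarith
    have hwε : |w| < ε := by rw [abs_of_pos hw0]; linarith
    have hw4 : |w| ≤ ε/4 := by rw [abs_of_pos hw0]; linarith
    have hqlt2 : (q:ℝ) < 2 := by
      have h2' : x/x₀ < 2 := by rw [div_lt_iff₀ hx₀pos]; rw [hx₀]; linarith [hxx.2]
      linarith
    have hqabs : |(q:ℝ)*x₀| < ε := by
      rw [abs_mul, abs_of_pos hx₀pos]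
      have h2'' : |(q:ℝ)| < 2 := abs_lt.mpr ⟨hq1b, hqlt2⟩
      calc |(q:ℝ)| * x₀ < 2*x₀ := by nlinarith
        _ = ε := by rw [hx₀]; ring
    have hs1 : (q:ℝ)*x₀ + w = x := by rw [hw]; ring
    have hsplit := hadd ((q:ℝ)*x₀) w hqabs hwε (by rw [hs1]; exact hx)
    rw [hs1] at hsplit
    have hq_e : e ((q:ℝ)*x₀) = (q:ℝ) * e x₀ := hrat q x₀ hx₀abs hqabs
    have hsm := hsmall w hwε hw4
    have hcx : (q:ℝ) * e x₀ = c * ((q:ℝ)*x₀) := by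
      rw [hc]; field_simp
    have hassemble : e x - c*x = e w - c*w := by
      rw [hsplit, hq_e, hcx, hw]; ring
    rw [hassemble]
    have htri : |e w - c*w| ≤ |e w| + |c| * |w| := by
      calc |e w - c*w| ≤ |e w| + |c*w| := by
            simpa [sub_eq_add_neg, abs_neg] using abs_add_le (e w) (-(c*w))
        _ = |e w| + |c| * |w| := by rw [abs_mul]
    have hKbd : |e w| + |c| * |w| ≤ K * |w| := by
      rw [hK]; nlinarith [abs_nonneg w, abs_nonneg c]
    have hwa : |w| ≤ η := by rw [abs_of_pos hw0]; linarith
    calc |e w - c*w| ≤ K * |w| := le_trans htri hKbd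
      _ ≤ K * η := mul_le_mul_of_nonneg_left hwa hK0
  -- conclude
  have hzero : |e x - c*x| ≤ 0 := by
    by_contra hpos
    push_neg at hpos
    set v := |e x - c*x| with hv
    have hKpos : (0:ℝ) < 2*(K+1) := by linarith
    have hη : 0 < min (v/(2*(K+1))) (ε/4) := by positivity
    have hb := key _ hη (min_le_right _ _)
    have h1 : K * min (v/(2*(K+1))) (ε/4) ≤ K * (v/(2*(K+1))) :=
      mul_le_mul_of_nonneg_left (min_le_left _ _) hK0
    have h2 : K * (v/(2*(K+1))) < v := by
      rw [show K * (v/(2*(K+1))) = (K*v)/(2*(K+1)) by ring, div_lt_iff₀ hKpos]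
      nlinarith
    linarith
  have hnn := abs_nonneg (e x - c*x)
  have : e x - c*x = 0 := abs_eq_zero.mp (le_antisymm hzero hnn)
  linarith

namespace RlmAux

variable {f : ℝ}

lemma rlm_def (f x : ℝ) : rlmDpl1Extreme3a f x =
    (if Int.fract x ≤ f then Int.fract x / f
     else if Int.fract x < (1 + f) / 2 then 2 * Int.fract x / (1 + 2 * f)
     else if Int.fract x = (1 + f) / 2 then 1 / 2
     else (2 * Int.fract x - 1) / (1 + 2 * f)) := rfl

lemma rlm_fract (f x : ℝ) :
    rlmDpl1Extreme3a f (Int.fract x) = rlmDpl1Extreme3a f x := by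
  rw [rlm_def, rlm_def, Int.fract_fract]

lemma rlm_int (f x : ℝ) (n : ℤ) :
    rlmDpl1Extreme3a f (x + n) = rlmDpl1Extreme3a f x := by
  rw [rlm_def, rlm_def, Int.fract_add_intCast]

lemma rlm_one (f x : ℝ) : rlmDpl1Extreme3a f (x + 1) = rlmDpl1Extreme3a f x := by
  have := rlm_int f x 1; push_cast at this; exact this

lemma valA (hf0 : 0 < f) (hf : f < 1/3) {t : ℝ} (h0 : 0 ≤ t) (h1 : t ≤ f) :
    rlmDpl1Extreme3a f t = t / f := by
  rw [rlm_def, Int.fract_eq_self.mpr ⟨h0, by linarith⟩, if_pos h1]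

lemma valB (hf0 : 0 < f) (hf : f < 1/3) {t : ℝ} (h0 : f < t) (h1 : t < (1+f)/2) :
    rlmDpl1Extreme3a f t = 2 * t / (1 + 2 * f) := by
  rw [rlm_def, Int.fract_eq_self.mpr ⟨by linarith, by linarith⟩, if_neg (by linarith),
    if_pos h1]

lemma valC (hf0 : 0 < f) (hf : f < 1/3) :
    rlmDpl1Extreme3a f ((1+f)/2) = 1 / 2 := by
  rw [rlm_def, Int.fract_eq_self.mpr ⟨by linarith, by linarith⟩, if_neg (by linarith),
    if_neg (by linarith), if_pos rfl]

lemma valD (hf0 : 0 < f) (hf : f < 1/3) {t : ℝ} (h0 : (1+f)/2 < t) (h1 : t < 1) :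
    rlmDpl1Extreme3a f t = (2 * t - 1) / (1 + 2 * f) := by
  rw [rlm_def, Int.fract_eq_self.mpr ⟨by linarith, h1⟩, if_neg (by linarith),
    if_neg (by linarith), if_neg (by linarith)]

lemma rlm_nonneg (hf0 : 0 < f) (hf : f < 1/3) (x : ℝ) :
    0 ≤ rlmDpl1Extreme3a f x := by
  have h0 := Int.fract_nonneg x
  rw [rlm_def]
  have hc : (0:ℝ) < 1 + 2*f := by linarith
  split_ifs with h1 h2 h3
  · positivity
  · positivity
  · norm_num
  · have : (1+f)/2 < Int.fract x := lt_of_le_of_ne (not_lt.mp h2) (Ne.symm h3)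
    have : (0:ℝ) ≤ 2 * Int.fract x - 1 := by linarith
    positivity

lemma rlm_zero (hf0 : 0 < f) : rlmDpl1Extreme3a f 0 = 0 := by
  rw [rlm_def]
  norm_num [Int.fract_zero, hf0.le]

lemma rlm_symm (hf0 : 0 < f) (hf : f < 1/3) (x : ℝ) :
    rlmDpl1Extreme3a f x + rlmDpl1Extreme3a f (f - x) = 1 := by
  have hc : (0:ℝ) < 1 + 2*f := by linarith
  rw [← rlm_fract f x]
  have hfx : rlmDpl1Extreme3a f (f - x) = rlmDpl1Extreme3a f (f - Int.fract x) := by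
    have h : f - Int.fract x = (f - x) + (⌊x⌋ : ℤ) := by
      rw [Int.fract]
      ring
    rw [h, rlm_int]
  rw [hfx]
  set t := Int.fract x with htdef
  have h0 : 0 ≤ t := Int.fract_nonneg x
  have h1 : t < 1 := Int.fract_lt_one x
  rcases le_or_gt t f with hA | hA
  · rw [valA hf0 hf h0 hA, valA hf0 hf (by linarith) (by linarith)]
    field_simp
    ring
  · have hft : rlmDpl1Extreme3a f (f - t) = rlmDpl1Extreme3a f (f - t + 1) := by
      rw [rlm_one]
    rcases lt_trichotomy t ((1+f)/2) with hB | hB | hB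
    · rw [valB hf0 hf hA hB, hft, valD hf0 hf (by linarith) (by linarith)]
      field_simp; ring
    · rw [hB] at hft ⊢
      rw [valC hf0 hf, hft]
      have : f - (1+f)/2 + 1 = (1+f)/2 := by ring
      rw [this, valC hf0 hf]; norm_num
    · rw [valD hf0 hf hB h1, hft, valB hf0 hf (by linarith) (by linarith)]
      field_simp; ring


lemma frac_le {a b c d : ℝ} (hd : 0 < d) (h : a ≤ b + c) : a / d ≤ b / d + c / d := by
  rw [← add_div]
  exact (div_le_div_iff_of_pos_right hd).mpr h

set_option maxHeartbeats 1600000 in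
lemma subadd_core (hf0 : 0 < f) (hf : f < 1/3) {s t : ℝ}
    (hs0 : 0 ≤ s) (ht0 : 0 ≤ t) (ht1 : t < 1) (hst : s ≤ t) :
    rlmDpl1Extreme3a f (s + t) ≤ rlmDpl1Extreme3a f s + rlmDpl1Extreme3a f t := by
  have hc : (0:ℝ) < 1 + 2*f := by linarith
  have hD : (0:ℝ) < 2*f*(1+2*f) := by positivity
  have hf' : f ≠ 0 := ne_of_gt hf0
  have hc' : (1:ℝ) + 2*f ≠ 0 := ne_of_gt hc
  have eA : ∀ u:ℝ, u / f = (2*(1+2*f)*u) / (2*f*(1+2*f)) := fun u => by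
    field_simp
  have eB : ∀ u:ℝ, 2*u/(1+2*f) = (4*f*u)/(2*f*(1+2*f)) := fun u => by
    field_simp; ring
  have eC : (1:ℝ)/2 = (f*(1+2*f))/(2*f*(1+2*f)) := by
    rw [div_eq_div_iff two_ne_zero (ne_of_gt hD)]; ring
  have eD : ∀ u:ℝ, (2*u-1)/(1+2*f) = (2*f*(2*u-1))/(2*f*(1+2*f)) := fun u => by
    field_simp
  have hshift : 1 ≤ s + t → rlmDpl1Extreme3a f (s+t) = rlmDpl1Extreme3a f (s+t-1) :=
    fun _ => by conv_lhs => rw [show s+t = (s+t-1)+1 by ring, rlm_one]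
  by_cases htA : t ≤ f
  · -- case A × A
    have hsA : s ≤ f := le_trans hst htA
    rw [valA hf0 hf hs0 hsA, valA hf0 hf ht0 htA]
    by_cases hu : s + t ≤ f
    · rw [valA hf0 hf (by linarith) hu, ← add_div]
    · push_neg at hu
      rw [valB hf0 hf hu (by linarith), eB, eA, eA]
      exact frac_le hD (by nlinarith)
  · push_neg at htA
    by_cases hsA : s ≤ f
    · rcases lt_trichotomy t ((1+f)/2) with htB | htC | htD
      · -- A × B
        rw [valA hf0 hf hs0 hsA, valB hf0 hf htA htB]
        rcases lt_trichotomy (s+t) ((1+f)/2) with hu | hu | hu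
        · rw [valB hf0 hf (by linarith) hu, eB, eA, eB]
          exact frac_le hD (by nlinarith)
        · rw [hu, valC hf0 hf, eC, eA, eB]
          exact frac_le hD (by nlinarith)
        · rw [valD hf0 hf hu (by linarith), eD, eA, eB]
          exact frac_le hD (by nlinarith)
      · -- A × C
        subst htC
        rcases eq_or_lt_of_le hs0 with hs0' | hs0'
        · rw [← hs0', zero_add, rlm_zero hf0, zero_add]
        · rw [valA hf0 hf hs0 hsA, valC hf0 hf,
            valD hf0 hf (by linarith) (by linarith), eD, eA, eC]
          exact frac_le hD (by nlinarith)
      · -- A × D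
        rw [valA hf0 hf hs0 hsA, valD hf0 hf htD ht1]
        by_cases hu1 : s + t < 1
        · rw [valD hf0 hf (by linarith) hu1, eD, eA, eD]
          exact frac_le hD (by nlinarith)
        · push_neg at hu1
          rw [hshift hu1, valA hf0 hf (by linarith) (by linarith), eA, eA, eD]
          exact frac_le hD (by nlinarith)
    · push_neg at hsA
      have hs1 : s < 1 := lt_of_le_of_lt hst ht1
      rcases lt_trichotomy s ((1+f)/2) with hsB | hsC | hsD
      · rcases lt_trichotomy t ((1+f)/2) with htB | htC | htD
        · -- B × B
          rw [valB hf0 hf hsA hsB, valB hf0 hf htA htB]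
          rcases lt_trichotomy (s+t) ((1+f)/2) with hu | hu | hu
          · rw [valB hf0 hf (by linarith) hu, eB, eB, eB]
            exact frac_le hD (by nlinarith)
          · rw [hu, valC hf0 hf, eC, eB, eB]
            exact frac_le hD (by nlinarith)
          · by_cases hu1 : s + t < 1
            · rw [valD hf0 hf hu hu1, eD, eB, eB]
              exact frac_le hD (by nlinarith)
            · push_neg at hu1
              rw [hshift hu1, valA hf0 hf (by linarith) (by linarith), eA, eB, eB]
              exact frac_le hD (by nlinarith)
        · -- B × C
          subst htC
          rw [valB hf0 hf hsA hsB, valC hf0 hf]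
          by_cases hu1 : s + (1+f)/2 < 1
          · rw [valD hf0 hf (by linarith) hu1, eD, eB, eC]
            exact frac_le hD (by nlinarith)
          · push_neg at hu1
            rw [hshift hu1, valA hf0 hf (by linarith) (by linarith), eA, eB, eC]
            exact frac_le hD (by nlinarith)
        · -- B × D
          rw [valB hf0 hf hsA hsB, valD hf0 hf htD ht1]
          by_cases hu1 : s + t < 1
          · rw [valD hf0 hf (by linarith) hu1, eD, eB, eD]
            exact frac_le hD (by nlinarith)
          · push_neg at hu1
            by_cases hu2 : s + t - 1 ≤ f
            · rw [hshift hu1, valA hf0 hf (by linarith) hu2, eA, eB, eD]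
              exact frac_le hD (by nlinarith)
            · push_neg at hu2
              rw [hshift hu1, valB hf0 hf hu2 (by linarith), eB, eB, eD]
              exact frac_le hD (by nlinarith)
      · -- s = (1+f)/2
        rcases lt_trichotomy t ((1+f)/2) with htB | htC | htD
        · linarith
        · -- C × C
          subst htC; subst hsC
          rw [valC hf0 hf, hshift (by linarith),
            valA hf0 hf (by linarith) (by linarith), eA, eC]
          exact frac_le hD (by nlinarith)
        · -- C × D
          subst hsC
          rw [valC hf0 hf, valD hf0 hf htD ht1, hshift (by linarith),
            valB hf0 hf (by linarith) (by linarith), eB, eC, eD]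
          exact frac_le hD (by nlinarith)
      · rcases lt_trichotomy t ((1+f)/2) with htB | htC | htD
        · linarith
        · linarith
        · -- D × D
          rw [valD hf0 hf hsD hs1, valD hf0 hf htD ht1, hshift (by linarith)]
          rcases lt_trichotomy (s+t-1) ((1+f)/2) with hu | hu | hu
          · rw [valB hf0 hf (by linarith) hu, eB, eD, eD]
            exact frac_le hD (by nlinarith)
          · rw [hu, valC hf0 hf, eC, eD, eD]
            exact frac_le hD (by nlinarith)
          · rw [valD hf0 hf hu (by linarith), eD, eD, eD]
            exact frac_le hD (by nlinarith)

lemma rlm_subadd (hf0 : 0 < f) (hf : f < 1/3) (x y : ℝ) :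
    rlmDpl1Extreme3a f (x + y) ≤ rlmDpl1Extreme3a f x + rlmDpl1Extreme3a f y := by
  have h1 : rlmDpl1Extreme3a f (x+y)
      = rlmDpl1Extreme3a f (Int.fract x + Int.fract y) := by
    have hxy : x + y = (Int.fract x + Int.fract y) + ((⌊x⌋ + ⌊y⌋ : ℤ) : ℝ) := by
      simp only [Int.fract]; push_cast; ring
    rw [hxy, rlm_int]
  rw [h1, ← rlm_fract f x, ← rlm_fract f y]
  rcases le_total (Int.fract x) (Int.fract y) with h | h
  · exact subadd_core hf0 hf (Int.fract_nonneg x) (Int.fract_nonneg y)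
      (Int.fract_lt_one y) h
  · rw [add_comm (Int.fract x), add_comm (rlmDpl1Extreme3a f (Int.fract x))]
    exact subadd_core hf0 hf (Int.fract_nonneg y) (Int.fract_nonneg x)
      (Int.fract_lt_one x) h


lemma rlm_minimal (hf0 : 0 < f) (hf : f < 1/3) : MinimalValid f (rlmDpl1Extreme3a f) :=
  ⟨rlm_nonneg hf0 hf, rlm_zero hf0, fun x => rlm_one f x, rlm_subadd hf0 hf,
    rlm_symm hf0 hf⟩

lemma rlmE1 (hf0 : 0 < f) (hf : f < 1/3) {x y : ℝ} (hx : 0 ≤ x) (hy : 0 ≤ y)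
    (hxy : x + y ≤ f) :
    rlmDpl1Extreme3a f x + rlmDpl1Extreme3a f y = rlmDpl1Extreme3a f (x + y) := by
  rw [valA hf0 hf hx (by linarith), valA hf0 hf hy (by linarith),
    valA hf0 hf (by linarith) hxy, ← add_div]

lemma rlmE2 (hf0 : 0 < f) (hf : f < 1/3) {x y : ℝ} (hx : f < x) (hy : (1+f)/2 < y)
    (hy1 : y < 1) (hxy : x + y < 1) :
    rlmDpl1Extreme3a f x + rlmDpl1Extreme3a f y = rlmDpl1Extreme3a f (x + y) := by
  have hxa : x < (1+f)/2 := by linarith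
  rw [valB hf0 hf hx hxa, valD hf0 hf hy hy1, valD hf0 hf (by linarith) hxy,
    ← add_div]
  congr 1; ring

lemma rlmE3 (hf0 : 0 < f) (hf : f < 1/3) {x y : ℝ} (hx : (1+f)/2 < x) (hx1 : x < 1)
    (hy : (1+f)/2 < y) (hy1 : y < 1) (h1 : f < x + y - 1) (h2 : x + y - 1 < (1+f)/2) :
    rlmDpl1Extreme3a f x + rlmDpl1Extreme3a f y = rlmDpl1Extreme3a f (x + y) := by
  have hs : rlmDpl1Extreme3a f (x+y) = rlmDpl1Extreme3a f (x+y-1) := by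
    conv_lhs => rw [show x+y = (x+y-1)+1 by ring, rlm_one]
  rw [valD hf0 hf hx hx1, valD hf0 hf hy hy1, hs, valB hf0 hf h1 h2, ← add_div]
  congr 1; ring

set_option maxHeartbeats 1600000 in
lemma eq_of_avg (hf0 : 0 < f) (hf : f < 1/3) {g₁ g₂ : ℝ → ℝ}
    (h₁ : MinimalValid f g₁) (h₂ : MinimalValid f g₂)
    (havg : ∀ x, rlmDpl1Extreme3a f x = (g₁ x + g₂ x) / 2) :
    g₁ = rlmDpl1Extreme3a f := by
  obtain ⟨g1nn, g10, g1per, g1sub, g1sym⟩ := h₁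
  obtain ⟨g2nn, g20, g2per, g2sub, g2sym⟩ := h₂
  have hc : (0:ℝ) < 1 + 2*f := by linarith
  have hc' : (1:ℝ) + 2*f ≠ 0 := ne_of_gt hc
  have gle1 : ∀ x, g₁ x ≤ 1 := fun x => by
    have h := g1sym x; have := g1nn (f - x); linarith
  have g1f : g₁ f = 1 := by
    have h := g1sym 0; rw [g10, sub_zero] at h; linarith
  have g1perdown : ∀ x : ℝ, g₁ (x - 1) = g₁ x := by
    intro x
    have h := g1per (x - 1); rw [show x - 1 + 1 = x by ring] at h; exact h.symm
  have g1int : ∀ (x : ℝ) (n : ℤ), g₁ (x + n) = g₁ x := by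
    intro x n
    induction n using Int.induction_on with
    | zero => simp
    | succ k ih =>
      push_cast at ih ⊢
      rw [show x + ((k:ℝ)+1) = (x + (k:ℝ)) + 1 by ring, g1per, ih]
    | pred k ih =>
      push_cast at ih ⊢
      rw [show x + (-(k:ℝ)-1) = (x + (-(k:ℝ))) - 1 by ring, g1perdown, ih]
  have transfer : ∀ x y : ℝ, rlmDpl1Extreme3a f x + rlmDpl1Extreme3a f y
      = rlmDpl1Extreme3a f (x + y) → g₁ x + g₁ y = g₁ (x + y) := by
    intro x y h
    have s1 := g1sub x y
    have s2 := g2sub x y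
    have a1 := havg x; have a2 := havg y; have a3 := havg (x+y)
    linarith
  -- Step 1 : g₁ is linear on [0, f]
  have hadd01 : ∀ x y, 0 ≤ x → 0 ≤ y → x + y ≤ f → g₁ (x+y) = g₁ x + g₁ y :=
    fun x y hx hy hxy => (transfer x y (rlmE1 hf0 hf hx hy hxy)).symm
  have mono : ∀ x y, 0 ≤ x → x ≤ y → y ≤ f → g₁ x ≤ g₁ y := by
    intro x y hx hxy hyf
    have h := hadd01 x (y - x) hx (by linarith) (by linarith)
    rw [show x + (y-x) = y by ring] at h
    have := g1nn (y - x); linarith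
  have hmulnat : ∀ n : ℕ, ∀ x : ℝ, 0 ≤ x → (n:ℝ)*x ≤ f → g₁ ((n:ℝ)*x) = n * g₁ x := by
    intro n
    induction n with
    | zero => intro x _ _; simpa using g10
    | succ n ih =>
      intro x hx hnx
      have hcast : ((n+1:ℕ):ℝ) = (n:ℝ)+1 := by push_cast; ring
      rw [hcast] at hnx ⊢
      have hle : (n:ℝ)*x ≤ ((n:ℝ)+1)*x := by nlinarith
      have h1 : g₁ ((n:ℝ)*x + x) = g₁ ((n:ℝ)*x) + g₁ x :=
        hadd01 _ _ (by positivity) hx (by linarith)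
      rw [show ((n:ℝ)+1)*x = (n:ℝ)*x + x by ring, h1, ih x hx (by linarith)]
      ring
  have hqval : ∀ q : ℚ, 0 ≤ q → q ≤ 1 → g₁ ((q:ℝ)*f) = (q:ℝ) := by
    intro q hq0 hq1
    have hden : (0:ℝ) < (q.den:ℝ) := by exact_mod_cast q.pos
    have hrecpos : 0 ≤ f / (q.den:ℝ) := by positivity
    have hfr : ((q.den:ℕ):ℝ) * (f/(q.den:ℝ)) = f := by field_simp
    have h1 : g₁ f = (q.den:ℝ) * g₁ (f/(q.den:ℝ)) := by
      have := hmulnat q.den (f/(q.den:ℝ)) hrecpos (by rw [hfr])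
      rw [hfr] at this; exact this
    rw [g1f] at h1
    have hv : g₁ (f/(q.den:ℝ)) = 1/(q.den:ℝ) := by
      rw [eq_div_iff (ne_of_gt hden)]; linarith [h1]
    have hnum0 : 0 ≤ q.num := Rat.num_nonneg.mpr hq0
    have hcast : ((q.num.toNat:ℕ):ℝ) = ((q.num:ℤ):ℝ) :=
      by exact_mod_cast congrArg (Int.cast : ℤ → ℝ) (Int.toNat_of_nonneg hnum0)
    have hqf : ((q.num.toNat:ℕ):ℝ) * (f/(q.den:ℝ)) = (q:ℝ)*f := by
      rw [hcast, Rat.cast_def]; field_simp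
    have hqf_le : (q:ℝ)*f ≤ f := by
      have : (q:ℝ) ≤ 1 := by exact_mod_cast hq1
      nlinarith
    have h2 : g₁ ((q:ℝ)*f) = (q.num.toNat:ℝ) * g₁ (f/(q.den:ℝ)) := by
      have := hmulnat q.num.toNat (f/(q.den:ℝ)) hrecpos (by rw [hqf]; exact hqf_le)
      rw [hqf] at this; exact this
    rw [h2, hcast, hv, Rat.cast_def]
    ring
  have step1 : ∀ x, 0 ≤ x → x ≤ f → g₁ x = x / f := by
    intro x hx0 hxf
    rcases eq_or_lt_of_le hxf with rfl | hxf'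
    · rw [g1f, div_self (ne_of_gt hf0)]
    apply le_antisymm
    · by_contra hgt; push_neg at hgt
      have hxf1 : x/f < 1 := by rw [div_lt_one hf0]; exact hxf'
      obtain ⟨q, hq1, hq2⟩ := exists_rat_btwn (lt_min hxf1 hgt)
      have hq0 : (0:ℚ) ≤ q := by
        have : (0:ℝ) ≤ (q:ℝ) := le_trans (by positivity) hq1.le
        exact_mod_cast this
      have hq1' : q ≤ 1 := by
        have : (q:ℝ) < 1 := lt_of_lt_of_le hq2 (min_le_left _ _)
        exact_mod_cast this.le
      have hxq : x ≤ (q:ℝ)*f := by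
        rw [div_lt_iff₀ hf0] at hq1; linarith
      have hm := mono x ((q:ℝ)*f) hx0 hxq
        (by nlinarith [(show (q:ℝ) ≤ 1 by exact_mod_cast hq1')])
      rw [hqval q hq0 hq1'] at hm
      have := lt_of_lt_of_le hq2 (min_le_right _ _)
      linarith
    · by_contra hgt; push_neg at hgt
      have hg0 : 0 ≤ g₁ x := g1nn x
      obtain ⟨q, hq1, hq2⟩ := exists_rat_btwn hgt
      have hq0 : (0:ℚ) ≤ q := by
        have : (0:ℝ) ≤ (q:ℝ) := le_trans hg0 hq1.le
        exact_mod_cast this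
      have hqle1 : q ≤ 1 := by
        have hx1 : x/f ≤ 1 := by rw [div_le_one hf0]; linarith
        have : (q:ℝ) ≤ 1 := le_trans hq2.le hx1
        exact_mod_cast this
      have hqx : (q:ℝ)*f ≤ x := by
        rw [lt_div_iff₀ hf0] at hq2; linarith
      have hm := mono ((q:ℝ)*f) x (by positivity) hqx (by linarith)
      rw [hqval q hq0 hqle1] at hm
      linarith
  -- symmetry shift
  have hsymshift : ∀ u : ℝ, g₁ (1 + f - u) = 1 - g₁ u := by
    intro u
    have h := g1sym (1 + f - u)
    rw [show f - (1 + f - u) = u - 1 by ring, g1perdown u] at h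
    linarith
  have hstar3 : ∀ u v w : ℝ, f < u → u < (1+f)/2 → f < v → v < (1+f)/2 →
      f < w → w < (1+f)/2 → u + v + w = 1 + 2*f → g₁ u + g₁ v + g₁ w = 2 := by
    intro u v w hu1 hu2 hv1 hv2 hw1 hw2 hsum
    have hE := rlmE3 hf0 hf (x := 1+f-u) (y := 1+f-v) (by linarith) (by linarith)
      (by linarith) (by linarith) (by linarith) (by linarith)
    have ht := transfer _ _ hE
    rw [hsymshift u, hsymshift v, show (1+f-u) + (1+f-v) = w + 1 by linarith,
      g1per w] at ht
    linarith
  have hstarstar : ∀ x w : ℝ, f < x → f < w → x + w < (1+f)/2 →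
      g₁ x + g₁ w = g₁ (x+w) := by
    intro x w hx hw hxw
    have hE := rlmE2 hf0 hf (x := x) (y := 1+f-(x+w)) hx (by linarith) (by linarith)
      (by linarith)
    have ht := transfer _ _ hE
    rw [hsymshift (x+w), show x + (1+f-(x+w)) = 1+f-w by ring, hsymshift w] at ht
    linarith
  have gm : g₁ ((1+2*f)/3) = 2/3 := by
    have := hstar3 ((1+2*f)/3) ((1+2*f)/3) ((1+2*f)/3) (by linarith) (by linarith)
      (by linarith) (by linarith) (by linarith) (by linarith) (by ring)
    linarith
  have e3 : ∀ d₁ d₂ d₃ : ℝ, -((1-f)/3) < d₁ → d₁ < (1-f)/6 → -((1-f)/3) < d₂ →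
      d₂ < (1-f)/6 → -((1-f)/3) < d₃ → d₃ < (1-f)/6 → d₁ + d₂ + d₃ = 0 →
      (g₁ ((1+2*f)/3 + d₁) - 2/3) + (g₁ ((1+2*f)/3 + d₂) - 2/3) +
        (g₁ ((1+2*f)/3 + d₃) - 2/3) = 0 := by
    intro d₁ d₂ d₃ h1 h2 h3 h4 h5 h6 hsum
    have := hstar3 ((1+2*f)/3 + d₁) ((1+2*f)/3 + d₂) ((1+2*f)/3 + d₃)
      (by linarith) (by linarith) (by linarith) (by linarith) (by linarith)
      (by linarith) (by linarith)
    linarith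
  obtain ⟨c, hcl⟩ := bounded_additive_linear (ε := (1-f)/6) (M := 1)
    (by linarith) (e := fun d => g₁ ((1+2*f)/3 + d) - 2/3)
    (by
      intro x y hx hy hxy
      have hx' := abs_lt.mp hx
      have hy' := abs_lt.mp hy
      have hxy' := abs_lt.mp hxy
      have h3 := e3 x y (-(x+y)) (by linarith) (by linarith) (by linarith)
        (by linarith) (by linarith) (by linarith) (by ring)
      have h2 := e3 (x+y) (-(x+y)) 0 (by linarith) (by linarith) (by linarith)
        (by linarith) (by linarith) (by linarith) (by ring)
      rw [add_zero, gm] at h2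
      linarith)
    (by
      intro x hx
      exact abs_le.mpr ⟨by linarith [g1nn ((1+2*f)/3 + x)],
        by linarith [gle1 ((1+2*f)/3 + x)]⟩)
  have hcl' : ∀ d : ℝ, |d| < (1-f)/6 → g₁ ((1+2*f)/3 + d) - 2/3 = c * d :=
    fun d hd => hcl d hd
  have hmidlin : ∀ t : ℝ, f < t → t < (1+f)/2 → g₁ t = 2/3 + c*(t - (1+2*f)/3) := by
    intro t ht1 ht2
    rcases lt_or_ge (-((1-f)/6)) (t - (1+2*f)/3) with hd | hd
    · have h := hcl' (t - (1+2*f)/3) (abs_lt.mpr ⟨by linarith, by linarith⟩)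
      rw [show (1+2*f)/3 + (t - (1+2*f)/3) = t by ring] at h
      linarith
    · have hd2 := hcl' (-(t - (1+2*f)/3)/2) (abs_lt.mpr ⟨by linarith, by linarith⟩)
      have h3 := e3 (t - (1+2*f)/3) (-(t - (1+2*f)/3)/2) (-(t - (1+2*f)/3)/2)
        (by linarith) (by linarith) (by linarith) (by linarith) (by linarith)
        (by linarith) (by ring)
      rw [show (1+2*f)/3 + (t - (1+2*f)/3) = t by ring] at h3
      linear_combination h3 - 2*hd2
  have hx₀ := hstarstar ((1+5*f)/8) ((1+5*f)/8) (by linarith) (by linarith)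
    (by linarith)
  rw [hmidlin ((1+5*f)/8) (by linarith) (by linarith),
    hmidlin ((1+5*f)/8 + (1+5*f)/8) (by linarith) (by linarith)] at hx₀
  have hcval : c = 2/(1+2*f) := by
    rw [eq_div_iff hc']
    linear_combination (-3) * hx₀
  have hmidB : ∀ t : ℝ, f < t → t < (1+f)/2 → g₁ t = 2*t/(1+2*f) := by
    intro t ht1 ht2
    rw [hmidlin t ht1 ht2, hcval]
    field_simp
    ring
  have hmidD : ∀ t : ℝ, (1+f)/2 < t → t < 1 → g₁ t = (2*t-1)/(1+2*f) := by
    intro t ht1 ht2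
    have h := hsymshift t
    rw [hmidB (1+f-t) (by linarith) (by linarith)] at h
    have key : 2*(1+f-t)/(1+2*f) + (2*t-1)/(1+2*f) = 1 := by
      rw [← add_div, div_eq_one_iff_eq hc']; ring
    linarith
  have hCmid : g₁ ((1+f)/2) = 1/2 := by
    have h := g1sym ((1+f)/2)
    rw [show f - (1+f)/2 = (1+f)/2 - 1 by ring, g1perdown ((1+f)/2)] at h
    linarith
  funext x
  have hgfr : g₁ x = g₁ (Int.fract x) := by
    have h := g1int (Int.fract x) ⌊x⌋
    rw [Int.fract_add_floor] at h
    exact h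
  rw [hgfr, ← rlm_fract f x]
  have h0 := Int.fract_nonneg x
  have h1 := Int.fract_lt_one x
  rcases le_or_gt (Int.fract x) f with hA | hA
  · rw [valA hf0 hf h0 hA, step1 _ h0 hA]
  · rcases lt_trichotomy (Int.fract x) ((1+f)/2) with hB | hB | hB
    · rw [valB hf0 hf hA hB, hmidB _ hA hB]
    · rw [hB, valC hf0 hf, hCmid]
    · rw [valD hf0 hf hB h1, hmidD _ hB h1]

end RlmAux

theorem rlmDpl1Extreme3a_extreme (f : ℝ) (hf0 : 0 < f) (hf : f < 1 / 3) :
    MinimalValid f (rlmDpl1Extreme3a f) ∧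
    ∀ π₁ π₂ : ℝ → ℝ, MinimalValid f π₁ → MinimalValid f π₂ →
      (∀ x, rlmDpl1Extreme3a f x = (π₁ x + π₂ x) / 2) →
      π₁ = rlmDpl1Extreme3a f ∧ π₂ = rlmDpl1Extreme3a f := by
  have hf' : f < 1/3 := hf
  refine ⟨RlmAux.rlm_minimal hf0 hf', ?_⟩
  intro π₁ π₂ h1 h2 havg
  have havg' : ∀ x, rlmDpl1Extreme3a f x = (π₂ x + π₁ x) / 2 := fun x => by
    rw [havg x]; ring
  exact ⟨RlmAux.eq_of_avg hf0 hf' h1 h2 havg,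
    RlmAux.eq_of_avg hf0 hf' h2 h1 havg'⟩
end

section
/- Let f be a real number with 0 < f < 1/3, and let π : ℝ → ℝ be the rlm_dpl1_extreme_3a function. Then π is a minimal valid function with parameter f; in particular π is nonnegative, π(0) = 0, π is periodic with period 1, π is subadditive, and π(x) + π(f−x) = 1 for all x ∈ ℝ. -/
lemma rlm_eval (f t : ℝ) (ht0 : 0 ≤ t) (ht1 : t < 1) :
    rlmDpl1Extreme3a f t =
      if t ≤ f then t / f
      else if t < (1 + f) / 2 then 2 * t / (1 + 2 * f)
      else if t = (1 + f) / 2 then 1 / 2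
      else (2 * t - 1) / (1 + 2 * f) := by
  simp only [rlmDpl1Extreme3a, Int.fract_eq_self.mpr ⟨ht0, ht1⟩]

lemma rlm_fract (f x : ℝ) : rlmDpl1Extreme3a f x = rlmDpl1Extreme3a f (Int.fract x) := by
  simp only [rlmDpl1Extreme3a, Int.fract_fract]

variable {f t : ℝ}

lemma rlm_nonneg' (hf0 : 0 < f) (hf : f < 1/3) (ht0 : 0 ≤ t) (ht1 : t < 1) :
    0 ≤ rlmDpl1Extreme3a f t := by
  rw [rlm_eval f t ht0 ht1]
  have hq : (0:ℝ) < 1 + 2*f := by linarith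
  split_ifs with h1 h2 h3
  · positivity
  · positivity
  · norm_num
  · have : (1+f)/2 < t := lt_of_le_of_ne (not_lt.mp h2) (Ne.symm h3)
    have : (0:ℝ) ≤ 2*t - 1 := by linarith
    positivity

-- LB1 : t < m → 2t/q ≤ π t
lemma rlm_LB1 (hf0 : 0 < f) (hf : f < 1/3) (ht0 : 0 ≤ t) (htm : t < (1+f)/2) :
    2*t/(1+2*f) ≤ rlmDpl1Extreme3a f t := by
  have ht1 : t < 1 := by linarith
  have hq : (0:ℝ) < 1 + 2*f := by linarith
  rw [rlm_eval f t ht0 ht1]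
  split_ifs with h1
  · rw [div_le_div_iff₀ hq hf0]; nlinarith
  · exact le_refl _

-- LB2 : (2t-1)/q ≤ π t
lemma rlm_LB2 (hf0 : 0 < f) (hf : f < 1/3) (ht0 : 0 ≤ t) (ht1 : t < 1) :
    (2*t-1)/(1+2*f) ≤ rlmDpl1Extreme3a f t := by
  have hq : (0:ℝ) < 1 + 2*f := by linarith
  rw [rlm_eval f t ht0 ht1]
  split_ifs with h1 h2 h3
  · rw [div_le_div_iff₀ hq hf0]; nlinarith
  · rw [div_le_div_iff₀ hq hq]; nlinarith
  · subst h3; rw [div_le_iff₀ hq]; nlinarith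
  · exact le_refl _

-- UB2 : f < t → π t ≤ 2t/q
lemma rlm_UB2 (hf0 : 0 < f) (hf : f < 1/3) (htf : f < t) (ht1 : t < 1) :
    rlmDpl1Extreme3a f t ≤ 2*t/(1+2*f) := by
  have ht0 : 0 ≤ t := le_of_lt (lt_trans hf0 htf)
  have hq : (0:ℝ) < 1 + 2*f := by linarith
  rw [rlm_eval f t ht0 ht1]
  split_ifs with h1 h2 h3
  · linarith
  · exact le_refl _
  · subst h3; rw [le_div_iff₀ hq]; nlinarith
  · rw [div_le_div_iff₀ hq hq]; nlinarith

-- UB3 : π t ≤ (2t+1)/q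
lemma rlm_UB3 (hf0 : 0 < f) (hf : f < 1/3) (ht0 : 0 ≤ t) (ht1 : t < 1) :
    rlmDpl1Extreme3a f t ≤ (2*t+1)/(1+2*f) := by
  have hq : (0:ℝ) < 1 + 2*f := by linarith
  rw [rlm_eval f t ht0 ht1]
  split_ifs with h1 h2 h3
  · rw [div_le_div_iff₀ hf0 hq]; nlinarith
  · rw [div_le_div_iff₀ hq hq]; nlinarith
  · rw [le_div_iff₀ hq]; nlinarith [not_lt.mp h2]
  · rw [div_le_div_iff₀ hq hq]; nlinarith

lemma rlm_evalD (hf0 : 0 < f) (hf : f < 1/3) (htm : (1+f)/2 < t) (ht1 : t < 1) :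
    rlmDpl1Extreme3a f t = (2*t-1)/(1+2*f) := by
  have ht0 : 0 ≤ t := by linarith
  rw [rlm_eval f t ht0 ht1]
  rw [if_neg (by push_neg; linarith), if_neg (not_lt.mpr htm.le), if_neg (by linarith)]

lemma rlm_evalC (hf0 : 0 < f) (hf : f < 1/3) :
    rlmDpl1Extreme3a f ((1+f)/2) = 1/2 := by
  rw [rlm_eval f _ (by linarith) (by linarith)]
  rw [if_neg (by push_neg; linarith), if_neg (lt_irrefl _), if_pos rfl]

lemma rlm_periodic (f : ℝ) (x : ℝ) : rlmDpl1Extreme3a f (x + 1) = rlmDpl1Extreme3a f x := by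
  simp only [rlmDpl1Extreme3a, Int.fract_add_one]

lemma rlm_core (hf0 : 0 < f) (hf : f < 1/3) {u : ℝ} (ht0 : 0 ≤ t) (ht1 : t < 1)
    (hu0 : 0 ≤ u) (hu1 : u < 1) :
    rlmDpl1Extreme3a f (t + u) ≤ rlmDpl1Extreme3a f t + rlmDpl1Extreme3a f u := by
  have hq : (0:ℝ) < 1 + 2*f := by linarith
  rcases lt_or_ge (t + u) 1 with hw1 | hw1
  · -- no wrap
    rcases le_or_gt (t + u) f with hwf | hwf
    · -- all three in branch A
      have ht : t ≤ f := by linarith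
      have hu : u ≤ f := by linarith
      rw [rlm_eval f t ht0 ht1, rlm_eval f u hu0 hu1,
        rlm_eval f (t+u) (by linarith) hw1, if_pos ht, if_pos hu, if_pos hwf]
      exact le_of_eq (add_div t u f)
    · rcases lt_or_ge t ((1+f)/2) with htm | htm
      · rcases lt_or_ge u ((1+f)/2) with hum | hum
        · -- both below midpoint
          have h1 := rlm_UB2 hf0 hf hwf hw1
          have h2 := rlm_LB1 hf0 hf ht0 htm
          have h3 := rlm_LB1 hf0 hf hu0 hum
          have : (2*t)/(1+2*f) + (2*u)/(1+2*f) = 2*(t+u)/(1+2*f) := by ring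
          linarith
        · -- u ≥ m
          rcases eq_or_lt_of_le ht0 with ht0' | ht0'
          · rw [← ht0', zero_add, rlm_eval f 0 le_rfl (by linarith),
              if_pos (by linarith : (0:ℝ) ≤ f), zero_div]
            linarith
          · have hwm : (1+f)/2 < t + u := by linarith
            rw [rlm_evalD hf0 hf hwm hw1]
            have h2 := rlm_LB1 hf0 hf ht0 htm
            have h3 := rlm_LB2 hf0 hf hu0 hu1
            have : (2*t)/(1+2*f) + (2*u-1)/(1+2*f) = (2*(t+u)-1)/(1+2*f) := by ring
            linarith
      · -- t ≥ m, hence u < m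
        have hum : u < (1+f)/2 := by nlinarith
        rcases eq_or_lt_of_le hu0 with hu0' | hu0'
        · rw [← hu0', add_zero, rlm_eval f 0 le_rfl (by linarith),
            if_pos (by linarith : (0:ℝ) ≤ f), zero_div]
          linarith
        · have hwm : (1+f)/2 < t + u := by linarith
          rw [rlm_evalD hf0 hf hwm hw1]
          have h2 := rlm_LB1 hf0 hf hu0 hum
          have h3 := rlm_LB2 hf0 hf ht0 ht1
          have : (2*t-1)/(1+2*f) + (2*u)/(1+2*f) = (2*(t+u)-1)/(1+2*f) := by ring
          linarith
  · -- wrap: t + u = (t+u-1) + 1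
    have hkey : rlmDpl1Extreme3a f (t + u) = rlmDpl1Extreme3a f (t + u - 1) := by
      rw [← rlm_periodic f (t+u-1)]; ring_nf
    rw [hkey]
    have hw0 : 0 ≤ t + u - 1 := by linarith
    have hw1' : t + u - 1 < 1 := by linarith
    rcases lt_or_ge t ((1+f)/2) with htm | htm
    · have h1 := rlm_UB3 hf0 hf hw0 hw1'
      have h2 := rlm_LB1 hf0 hf ht0 htm
      have h3 := rlm_LB2 hf0 hf hu0 hu1
      have : (2*t)/(1+2*f) + (2*u-1)/(1+2*f) = (2*(t+u-1)+1)/(1+2*f) := by ring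
      linarith
    · rcases lt_or_ge u ((1+f)/2) with hum | hum
      · have h1 := rlm_UB3 hf0 hf hw0 hw1'
        have h2 := rlm_LB1 hf0 hf hu0 hum
        have h3 := rlm_LB2 hf0 hf ht0 ht1
        have : (2*t-1)/(1+2*f) + (2*u)/(1+2*f) = (2*(t+u-1)+1)/(1+2*f) := by ring
        linarith
      · -- both ≥ m
        rcases lt_or_ge f (t+u-1) with hwf | hwf
        · have h1 := rlm_UB2 hf0 hf hwf hw1'
          have h2 := rlm_LB2 hf0 hf ht0 ht1
          have h3 := rlm_LB2 hf0 hf hu0 hu1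
          have : (2*t-1)/(1+2*f) + (2*u-1)/(1+2*f) = 2*(t+u-1)/(1+2*f) := by ring
          linarith
        · -- t = u = m, w = f
          have htm' : t = (1+f)/2 := by linarith
          have hum' : u = (1+f)/2 := by linarith
          have hwf' : t + u - 1 = f := by rw [htm', hum']; ring
          rw [hwf', htm', hum', rlm_evalC hf0 hf,
            rlm_eval f f hf0.le (by linarith), if_pos le_rfl, div_self hf0.ne']
          norm_num

lemma rlm_zero (hf0 : 0 < f) : rlmDpl1Extreme3a f 0 = 0 := by
  rw [rlm_eval f 0 le_rfl one_pos, if_pos hf0.le, zero_div]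

lemma rlm_nonneg (hf0 : 0 < f) (hf : f < 1/3) (x : ℝ) : 0 ≤ rlmDpl1Extreme3a f x := by
  rw [rlm_fract]
  exact rlm_nonneg' hf0 hf (Int.fract_nonneg x) (Int.fract_lt_one x)

lemma rlm_subadd (hf0 : 0 < f) (hf : f < 1/3) (x y : ℝ) :
    rlmDpl1Extreme3a f (x + y) ≤ rlmDpl1Extreme3a f x + rlmDpl1Extreme3a f y := by
  have hx : x + y = (Int.fract x + Int.fract y) + ((⌊x⌋ + ⌊y⌋ : ℤ) : ℝ) := by
    simp only [Int.fract]; push_cast; ring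
  have h1 : rlmDpl1Extreme3a f (x + y) = rlmDpl1Extreme3a f (Int.fract x + Int.fract y) := by
    rw [rlm_fract f (x+y), hx, Int.fract_add_intCast, ← rlm_fract]
  rw [h1, rlm_fract f x, rlm_fract f y]
  exact rlm_core hf0 hf (Int.fract_nonneg x) (Int.fract_lt_one x)
    (Int.fract_nonneg y) (Int.fract_lt_one y)

lemma rlm_sym (hf0 : 0 < f) (hf : f < 1/3) (x : ℝ) :
    rlmDpl1Extreme3a f x + rlmDpl1Extreme3a f (f - x) = 1 := by
  have hq : (0:ℝ) < 1 + 2*f := by linarith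
  have hfx : rlmDpl1Extreme3a f (f - x) = rlmDpl1Extreme3a f (f - Int.fract x) := by
    have : f - x = (f - Int.fract x) + ((-⌊x⌋ : ℤ) : ℝ) := by
      simp only [Int.fract]; push_cast; ring
    rw [rlm_fract f (f-x), this, Int.fract_add_intCast, ← rlm_fract]
  rw [hfx, rlm_fract f x]
  set t := Int.fract x with htdef
  have ht0 : 0 ≤ t := Int.fract_nonneg x
  have ht1 : t < 1 := Int.fract_lt_one x
  rcases le_or_gt t f with htf | htf
  · have h1 : rlmDpl1Extreme3a f t = t / f := by
      rw [rlm_eval f t ht0 ht1, if_pos htf]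
    have h2 : rlmDpl1Extreme3a f (f - t) = (f - t) / f := by
      rw [rlm_eval f (f-t) (by linarith) (by linarith), if_pos (by linarith)]
    rw [h1, h2, ← add_div]
    field_simp; ring
  · have hs : rlmDpl1Extreme3a f (f - t) = rlmDpl1Extreme3a f (f - t + 1) := by
      rw [← rlm_periodic f (f - t)]
    have hs0 : 0 ≤ f - t + 1 := by linarith
    have hs1 : f - t + 1 < 1 := by linarith
    have hsf : f < f - t + 1 := by linarith
    rcases lt_trichotomy t ((1+f)/2) with htm | htm | htm
    · have h1 : rlmDpl1Extreme3a f t = 2*t/(1+2*f) := by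
        rw [rlm_eval f t ht0 ht1, if_neg (not_le.mpr htf), if_pos htm]
      have h2 : rlmDpl1Extreme3a f (f - t + 1) = (2*(f-t+1)-1)/(1+2*f) :=
        rlm_evalD hf0 hf (by linarith) hs1
      rw [h1, hs, h2, ← add_div]
      field_simp; ring
    · have h1 : rlmDpl1Extreme3a f t = 1/2 := by rw [htm]; exact rlm_evalC hf0 hf
      have h2 : f - t + 1 = (1+f)/2 := by rw [htm]; ring
      rw [h1, hs, h2, rlm_evalC hf0 hf]
      norm_num
    · have h1 : rlmDpl1Extreme3a f t = (2*t-1)/(1+2*f) := rlm_evalD hf0 hf htm ht1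
      have h2 : rlmDpl1Extreme3a f (f - t + 1) = 2*(f-t+1)/(1+2*f) := by
        rw [rlm_eval f (f-t+1) hs0 hs1, if_neg (not_le.mpr hsf),
          if_pos (by linarith)]
      rw [h1, hs, h2, ← add_div]
      field_simp; ring

theorem rlmDpl1Extreme3a_minimal (f : ℝ) (hf0 : 0 < f) (hf : f < 1 / 3) :
    MinimalValid f (rlmDpl1Extreme3a f) ∧
    (∀ x, 0 ≤ rlmDpl1Extreme3a f x) ∧
    rlmDpl1Extreme3a f 0 = 0 ∧
    (∀ x, rlmDpl1Extreme3a f (x + 1) = rlmDpl1Extreme3a f x) ∧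
    (∀ x y, rlmDpl1Extreme3a f (x + y) ≤ rlmDpl1Extreme3a f x + rlmDpl1Extreme3a f y) ∧
    (∀ x, rlmDpl1Extreme3a f x + rlmDpl1Extreme3a f (f - x) = 1) :=
  ⟨⟨rlm_nonneg hf0 hf, rlm_zero hf0, rlm_periodic f, rlm_subadd hf0 hf, rlm_sym hf0 hf⟩,
    rlm_nonneg hf0 hf, rlm_zero hf0, rlm_periodic f, rlm_subadd hf0 hf, rlm_sym hf0 hf⟩
end

section
/- Let f be a real number with 0 < f < 1/3, set b = (1+f)/2, and let π : ℝ → ℝ be the rlm_dpl1_extreme_3a function. Then for all x, y ∈ ℝ with b < x < 1, b < y < 1, and 1 + f < x + y < 1 + b, the additivity relation π(x) + π(y) = π(x+y) holds. -/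
theorem rlmDpl1Extreme3a_additive_F2 (f : ℝ) (hf0 : 0 < f) (hf : f < 1 / 3)
    (b : ℝ) (hb : b = (1 + f) / 2)
    (x y : ℝ) (hxb : b < x) (hx1 : x < 1) (hyb : b < y) (hy1 : y < 1)
    (hxyl : 1 + f < x + y) (hxyu : x + y < 1 + b) :
    rlmDpl1Extreme3a f x + rlmDpl1Extreme3a f y = rlmDpl1Extreme3a f (x + y) := by
  have hfx : Int.fract x = x := Int.fract_eq_self.2 ⟨by linarith, hx1⟩
  have hfy : Int.fract y = y := Int.fract_eq_self.2 ⟨by linarith, hy1⟩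
  have hfxy : Int.fract (x + y) = x + y - 1 := by
    have : Int.fract (x + y - 1) = x + y - 1 := Int.fract_eq_self.2 ⟨by linarith, by linarith⟩
    rw [show x + y = (x + y - 1) + 1 by ring, Int.fract_add_one, this]; ring
  simp only [rlmDpl1Extreme3a, hfx, hfy, hfxy]
  rw [if_neg (by linarith), if_neg (by linarith), if_neg (by linarith),
    if_neg (by linarith), if_neg (by linarith), if_neg (by linarith),
    if_neg (by linarith), if_pos (by linarith)]
  have : (1:ℝ) + 2 * f ≠ 0 := by linarith
  field_simp
  ring
end

section
/- Let f ∈ (0,1) and let π, π¹, π² : ℝ → ℝ be minimal valid functions with parameter f such that π = (π¹ + π²)/2. If π is continuous from the right at 0, then π¹ and π² are continuous at every point at which π is continuous. -/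
lemma gj_abs_diff_le (π π₁ π₂ : ℝ → ℝ)
    (h1 : ∀ x, 0 ≤ π₁ x) (h2 : ∀ x, 0 ≤ π₂ x)
    (s1 : ∀ x y, π₁ (x + y) ≤ π₁ x + π₁ y)
    (s2 : ∀ x y, π₂ (x + y) ≤ π₂ x + π₂ y)
    (havg : ∀ x, π x = (π₁ x + π₂ x) / 2)
    (x y : ℝ) :
    |π₁ y - π₁ x| ≤ 2 * π |y - x| + 2 * |π y - π x| := by
  have habs : |π y - π x| ≥ π y - π x ∧ |π y - π x| ≥ -(π y - π x) :=
    ⟨le_abs_self _, neg_le_abs _⟩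
  rcases le_or_gt x y with h | h
  · have ht : |y - x| = y - x := abs_of_nonneg (by linarith)
    have e1 : π₁ y ≤ π₁ x + π₁ (y - x) := by
      have := s1 x (y - x); rwa [show x + (y - x) = y by ring] at this
    have e2 : π₂ y ≤ π₂ x + π₂ (y - x) := by
      have := s2 x (y - x); rwa [show x + (y - x) = y by ring] at this
    have b1 : π₁ (y - x) ≤ 2 * π (y - x) := by
      have := havg (y - x); have := h2 (y - x); linarith
    have b2 : π₂ (y - x) ≤ 2 * π (y - x) := by
      have := havg (y - x); have := h1 (y - x); linarith
    have hx := havg x; have hy := havg y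
    rw [ht, abs_le]
    constructor <;> nlinarith [h1 (y - x), h2 (y - x)]
  · have ht : |y - x| = x - y := by rw [abs_sub_comm]; exact abs_of_nonneg (by linarith)
    have e1 : π₁ x ≤ π₁ y + π₁ (x - y) := by
      have := s1 y (x - y); rwa [show y + (x - y) = x by ring] at this
    have e2 : π₂ x ≤ π₂ y + π₂ (x - y) := by
      have := s2 y (x - y); rwa [show y + (x - y) = x by ring] at this
    have b1 : π₁ (x - y) ≤ 2 * π (x - y) := by
      have := havg (x - y); have := h2 (x - y); linarith
    have b2 : π₂ (x - y) ≤ 2 * π (x - y) := by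
      have := havg (x - y); have := h1 (x - y); linarith
    have hx := havg x; have hy := havg y
    rw [ht, abs_le]
    constructor <;> nlinarith [h1 (x - y), h2 (x - y)]

theorem continuity_transfers (f : ℝ) (hf0 : 0 < f) (hf1 : f < 1)
    (π π₁ π₂ : ℝ → ℝ)
    (hπ : MinimalValid f π) (hπ₁ : MinimalValid f π₁) (hπ₂ : MinimalValid f π₂)
    (havg : ∀ x, π x = (π₁ x + π₂ x) / 2)
    (hright : ContinuousWithinAt π (Set.Ici 0) 0) :
    ∀ x : ℝ, ContinuousAt π x → ContinuousAt π₁ x ∧ ContinuousAt π₂ x := by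
  intro x hx
  -- the bound function tends to 0
  have hmap : Filter.Tendsto (fun y : ℝ => |y - x|) (nhds x) (nhdsWithin 0 (Set.Ici 0)) := by
    apply tendsto_nhdsWithin_of_tendsto_nhds_of_eventually_within
    · have : Filter.Tendsto (fun y : ℝ => y - x) (nhds x) (nhds 0) := by
        have h0 : ContinuousAt (fun y : ℝ => y - x) x :=
          continuousAt_id.sub continuousAt_const
        simpa using h0.tendsto
      simpa using this.abs
    · exact Filter.Eventually.of_forall fun y => Set.mem_Ici.mpr (abs_nonneg _)
  have hpart1 : Filter.Tendsto (fun y : ℝ => π |y - x|) (nhds x) (nhds 0) := by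
    have := hright.tendsto.comp hmap
    rwa [hπ.2.1] at this
  have hpart2 : Filter.Tendsto (fun y : ℝ => |π y - π x|) (nhds x) (nhds 0) := by
    have : Filter.Tendsto (fun y : ℝ => π y - π x) (nhds x) (nhds 0) := by
      simpa using hx.tendsto.sub (tendsto_const_nhds (x := π x))
    simpa using this.abs
  have hg : Filter.Tendsto (fun y : ℝ => 2 * π |y - x| + 2 * |π y - π x|)
      (nhds x) (nhds 0) := by
    have := (hpart1.const_mul 2).add (hpart2.const_mul 2)
    simpa using this
  have key : ∀ (q₁ q₂ : ℝ → ℝ), MinimalValid f q₁ → MinimalValid f q₂ →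
      (∀ z, π z = (q₁ z + q₂ z) / 2) → ContinuousAt q₁ x := by
    intro q₁ q₂ hq₁ hq₂ hav
    have hb := gj_abs_diff_le π q₁ q₂ hq₁.1 hq₂.1 hq₁.2.2.2.1 hq₂.2.2.2.1 hav x
    have : Filter.Tendsto (fun y : ℝ => q₁ y - q₁ x) (nhds x) (nhds 0) :=
      squeeze_zero_norm (fun y => by rw [Real.norm_eq_abs]; exact hb y) hg
    have := tendsto_sub_nhds_zero_iff.mp this
    exact this
  exact ⟨key π₁ π₂ hπ₁ hπ₂ havg,
    key π₂ π₁ hπ₂ hπ₁ (fun z => by rw [havg z]; ring)⟩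
end

section
/- Let f and b be real numbers such that 0 < f < b ≤ (1+f)/4, and let π : ℝ → ℝ be the drlm_backward_3_slope function. Then π is an extreme minimal valid function: π is a minimal valid function with parameter f, and whenever π = (π¹ + π²)/2 with π¹, π² minimal valid functions with parameter f, one has π¹ = π² = π. (No rationality assumption on f and b is needed.) -/
/-- The `drlm_backward_3_slope` function, periodic with period 1, defined via
the fractional part. -/
noncomputable def drlmBackward3Slope (f b : ℝ) : ℝ → ℝ := fun x =>
  let t := Int.fract x
  if t ≤ f then t / f
  else if t ≤ b then 1 + (1 + f - b) * (t - f) / ((1 + f) * (f - b))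
  else if t ≤ 1 + f - b then t / (1 + f)
  else (1 + f - b) * (t - 1) / ((1 + f) * (f - b))

namespace DrlmAux

/-- fract of sum only depends on fracts -/
lemma fract_add_eq (x y : ℝ) :
    Int.fract (x + y) = Int.fract (Int.fract x + Int.fract y) := by
  have h : x + y = Int.fract x + Int.fract y + ((⌊x⌋ + ⌊y⌋ : ℤ) : ℝ) := by
    push_cast
    have hx := Int.fract_add_floor x
    have hy := Int.fract_add_floor y
    linarith
  rw [h, Int.fract_add_intCast]

variable {f b : ℝ}

lemma eval1 (hf0 : 0 < f) (hfb : f < b) (hb : b ≤ (1+f)/4)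
    {t : ℝ} (h0 : 0 ≤ t) (h1 : t ≤ f) :
    drlmBackward3Slope f b t = t / f := by
  have hlt : t < 1 := by linarith
  simp only [drlmBackward3Slope]
  rw [Int.fract_eq_self.2 ⟨h0, hlt⟩, if_pos h1]

lemma eval2 (hf0 : 0 < f) (hfb : f < b) (hb : b ≤ (1+f)/4)
    {t : ℝ} (h0 : f ≤ t) (h1 : t ≤ b) :
    drlmBackward3Slope f b t = 1 + (1 + f - b) * (t - f) / ((1 + f) * (f - b)) := by
  have hlt : t < 1 := by linarith
  have ht0 : 0 ≤ t := by linarith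
  simp only [drlmBackward3Slope]
  rw [Int.fract_eq_self.2 ⟨ht0, hlt⟩]
  rcases eq_or_lt_of_le h0 with h | h
  · rw [if_pos (le_of_eq h.symm), ← h]
    field_simp
    ring
  · rw [if_neg (not_le.2 h), if_pos h1]

lemma eval3 (hf0 : 0 < f) (hfb : f < b) (hb : b ≤ (1+f)/4)
    {t : ℝ} (h0 : b ≤ t) (h1 : t ≤ 1 + f - b) :
    drlmBackward3Slope f b t = t / (1 + f) := by
  have hlt : t < 1 := by linarith
  have ht0 : 0 ≤ t := by linarith
  simp only [drlmBackward3Slope]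
  rw [Int.fract_eq_self.2 ⟨ht0, hlt⟩, if_neg (by push_neg; linarith)]
  rcases eq_or_lt_of_le h0 with h | h
  · rw [if_pos (le_of_eq h.symm), ← h]
    have hne1 : (1+f) ≠ 0 := by positivity
    have hne2 : f - b ≠ 0 := by intro hc; rw [sub_eq_zero] at hc; linarith
    field_simp
    ring
  · rw [if_neg (not_le.2 h), if_pos h1]

lemma eval4 (hf0 : 0 < f) (hfb : f < b) (hb : b ≤ (1+f)/4)
    {t : ℝ} (h0 : 1 + f - b ≤ t) (h1 : t ≤ 1) :
    drlmBackward3Slope f b t = (1 + f - b) * (t - 1) / ((1 + f) * (f - b)) := by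
  have ht0 : (0:ℝ) ≤ t := by linarith
  rcases eq_or_lt_of_le h1 with h | h
  · subst h
    simp only [drlmBackward3Slope, Int.fract_one]
    rw [if_pos (le_of_lt hf0)]
    simp
  · simp only [drlmBackward3Slope]
    rw [Int.fract_eq_self.2 ⟨ht0, h⟩, if_neg (by push_neg; linarith),
      if_neg (by push_neg; linarith)]
    rcases eq_or_lt_of_le h0 with h2 | h2
    · rw [if_pos (le_of_eq h2.symm), ← h2]
      have hne1 : (1+f) ≠ 0 := by positivity
      have hne2 : f - b ≠ 0 := by intro hc; rw [sub_eq_zero] at hc; linarith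
      field_simp
      ring
    · rw [if_neg (not_le.2 h2)]

lemma fract_self_eval (x : ℝ) :
    drlmBackward3Slope f b (Int.fract x) = drlmBackward3Slope f b x := by
  simp only [drlmBackward3Slope, Int.fract_fract]

lemma periodic (x : ℝ) :
    drlmBackward3Slope f b (x + 1) = drlmBackward3Slope f b x := by
  simp only [drlmBackward3Slope, Int.fract_add_one]


lemma hdiv (hf0 : 0 < f) (hfb : f < b) (hb : b ≤ (1+f)/4)
    {t : ℝ} (ht : 0 ≤ t) : t/(1+f) ≤ t/f := by
  have h1f : (0:ℝ) < 1+f := by linarith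
  rw [div_le_div_iff₀ h1f hf0]
  nlinarith

lemma hP23 (hf0 : 0 < f) (hfb : f < b) (hb : b ≤ (1+f)/4)
    {t : ℝ} (ht : t ≤ b) :
    t/(1+f) ≤ 1 + (1 + f - b) * (t - f) / ((1 + f) * (f - b)) := by
  have h1f : (0:ℝ) < 1+f := by linarith
  have hbf : (0:ℝ) < b - f := by linarith
  have hD : (0:ℝ) < f*((1+f)*(b-f)) := by
    exact mul_pos hf0 (mul_pos h1f hbf)
  have hfne : f ≠ 0 := ne_of_gt hf0
  have h1fne : (1:ℝ)+f ≠ 0 := ne_of_gt h1f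
  have hfbne : f - b ≠ 0 := by intro hc; rw [sub_eq_zero] at hc; linarith
  rw [← sub_nonneg]
  have key : 1 + (1 + f - b) * (t - f) / ((1 + f) * (f - b)) - t/(1+f)
      = ((b-t)*f) / (f*((1+f)*(b-f))) := by
    field_simp
    ring
  rw [key]
  exact div_nonneg (by nlinarith) (le_of_lt hD)

lemma hP43 (hf0 : 0 < f) (hfb : f < b) (hb : b ≤ (1+f)/4)
    {t : ℝ} (ht : 1+f-b ≤ t) :
    (1 + f - b) * (t - 1) / ((1 + f) * (f - b)) ≤ t/(1+f) := by
  have h1f : (0:ℝ) < 1+f := by linarith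
  have hbf : (0:ℝ) < b - f := by linarith
  have hD : (0:ℝ) < f*((1+f)*(b-f)) := mul_pos hf0 (mul_pos h1f hbf)
  have hfne : f ≠ 0 := ne_of_gt hf0
  have h1fne : (1:ℝ)+f ≠ 0 := ne_of_gt h1f
  have hfbne : f - b ≠ 0 := by intro hc; rw [sub_eq_zero] at hc; linarith
  rw [← sub_nonneg]
  have key : t/(1+f) - (1 + f - b) * (t - 1) / ((1 + f) * (f - b))
      = ((t-(1+f-b))*f) / (f*((1+f)*(b-f))) := by
    field_simp
    ring
  rw [key]
  exact div_nonneg (by nlinarith) (le_of_lt hD)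

lemma hlow (hf0 : 0 < f) (hfb : f < b) (hb : b ≤ (1+f)/4)
    {t : ℝ} (h0 : 0 ≤ t) (h1 : t ≤ 1+f-b) :
    t/(1+f) ≤ drlmBackward3Slope f b t := by
  rcases le_or_gt t f with h | h
  · rw [eval1 hf0 hfb hb h0 h]
    exact hdiv hf0 hfb hb h0
  · rcases le_or_gt t b with h2 | h2
    · rw [eval2 hf0 hfb hb (le_of_lt h) h2]
      exact hP23 hf0 hfb hb h2
    · rw [eval3 hf0 hfb hb (le_of_lt h2) h1]


set_option maxHeartbeats 1000000 in
lemma subadd_core (hf0 : 0 < f) (hfb : f < b) (hb : b ≤ (1+f)/4)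
    {u v : ℝ} (hu0 : 0 ≤ u) (huv : u ≤ v) (hv1 : v < 1) :
    drlmBackward3Slope f b (u+v) ≤ drlmBackward3Slope f b u + drlmBackward3Slope f b v := by
  have hv0 : 0 ≤ v := le_trans hu0 huv
  have hu1 : u < 1 := lt_of_le_of_lt huv hv1
  have h1f : (0:ℝ) < 1+f := by linarith
  have hbf : (0:ℝ) < b - f := by linarith
  have hf3 : f < 1/3 := by linarith
  have hb3 : b < 1/3 := by linarith
  have hbA : b < 1+f-b := by linarith
  have hA1 : 1+f-b < 1 := by linarith
  have hm1 : (0:ℝ) < (1+f)*(b-f) + f*(1+f-b) :=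
    add_pos (mul_pos h1f hbf) (mul_pos hf0 (by linarith))
  have hD : (0:ℝ) < f*((1+f)*(b-f)) := mul_pos hf0 (mul_pos h1f hbf)
  have hfne : f ≠ 0 := ne_of_gt hf0
  have h1fne : (1:ℝ)+f ≠ 0 := ne_of_gt h1f
  have hfbne : f - b ≠ 0 := by intro hc; rw [sub_eq_zero] at hc; linarith
  have hsplit : (u+v)/(1+f) = u/(1+f) + v/(1+f) := by ring
  have hper : ∀ z : ℝ, drlmBackward3Slope f b (z+1) = drlmBackward3Slope f b z :=
    fun z => periodic z
  rcases le_or_gt v f with hvf | hvf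
  · -- C1 : both in [0,f]
    rcases le_or_gt (u+v) f with hwf | hwf
    · rw [eval1 hf0 hfb hb hu0 (le_trans huv hvf), eval1 hf0 hfb hb hv0 hvf,
        eval1 hf0 hfb hb (by linarith) hwf]
      exact le_of_eq (by ring)
    · rcases le_or_gt (u+v) b with hwb | hwb
      · rw [eval1 hf0 hfb hb hu0 (le_trans huv hvf), eval1 hf0 hfb hb hv0 hvf,
          eval2 hf0 hfb hb (le_of_lt hwf) hwb]
        rw [← sub_nonneg]
        have key : u/f + v/f - (1 + (1+f-b)*((u+v)-f)/((1+f)*(f-b)))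
            = ((u+v-f)*((1+f)*(b-f)+f*(1+f-b)))/(f*((1+f)*(b-f))) := by
          field_simp
          ring
        rw [key]
        exact div_nonneg (mul_nonneg (by linarith) (le_of_lt hm1)) (le_of_lt hD)
      · have hwA : u+v ≤ 1+f-b := by linarith
        rw [eval1 hf0 hfb hb hu0 (le_trans huv hvf), eval1 hf0 hfb hb hv0 hvf,
          eval3 hf0 hfb hb (le_of_lt hwb) hwA]
        have d1 := hdiv hf0 hfb hb hu0
        have d2 := hdiv hf0 hfb hb hv0
        linarith
  · rcases le_or_gt v b with hvb | hvb
    · -- C2 : v in (f,b]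
      rcases le_or_gt u f with huf | huf
      · rcases le_or_gt (u+v) b with hwb | hwb
        · rw [eval1 hf0 hfb hb hu0 huf, eval2 hf0 hfb hb (le_of_lt hvf) hvb,
            eval2 hf0 hfb hb (by linarith) hwb]
          rw [← sub_nonneg]
          have key : u/f + (1 + (1+f-b)*(v-f)/((1+f)*(f-b)))
              - (1 + (1+f-b)*((u+v)-f)/((1+f)*(f-b)))
              = (u*((1+f)*(b-f)+f*(1+f-b)))/(f*((1+f)*(b-f))) := by
            field_simp
            ring
          rw [key]
          exact div_nonneg (mul_nonneg hu0 (le_of_lt hm1)) (le_of_lt hD)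
        · have hwA : u+v ≤ 1+f-b := by linarith
          rw [eval1 hf0 hfb hb hu0 huf, eval2 hf0 hfb hb (le_of_lt hvf) hvb,
            eval3 hf0 hfb hb (le_of_lt hwb) hwA]
          have d1 := hdiv hf0 hfb hb hu0
          have d2 := hP23 hf0 hfb hb hvb
          linarith
      · rcases le_or_gt (u+v) b with hwb | hwb
        · rw [eval2 hf0 hfb hb (le_of_lt huf) (le_trans huv hvb),
            eval2 hf0 hfb hb (le_of_lt hvf) hvb,
            eval2 hf0 hfb hb (by linarith) hwb]
          rw [← sub_nonneg]
          have key : (1 + (1+f-b)*(u-f)/((1+f)*(f-b))) + (1 + (1+f-b)*(v-f)/((1+f)*(f-b)))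
              - (1 + (1+f-b)*((u+v)-f)/((1+f)*(f-b)))
              = (f*((1+f)*(b-f)) + f^2*(1+f-b))/(f*((1+f)*(b-f))) := by
            field_simp
            ring
          rw [key]
          exact div_nonneg (by nlinarith) (le_of_lt hD)
        · have hwA : u+v ≤ 1+f-b := by linarith
          rw [eval2 hf0 hfb hb (le_of_lt huf) (le_trans huv hvb),
            eval2 hf0 hfb hb (le_of_lt hvf) hvb,
            eval3 hf0 hfb hb (le_of_lt hwb) hwA]
          have d1 := hP23 hf0 hfb hb (le_trans huv hvb)
          have d2 := hP23 hf0 hfb hb hvb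
          linarith
    · rcases le_or_gt v (1+f-b) with hvA | hvA
      · -- C3 : v in (b, A]
        rcases le_or_gt (u+v) (1+f-b) with hwA | hwA
        · rw [eval3 hf0 hfb hb (by linarith) hwA, eval3 hf0 hfb hb (le_of_lt hvb) hvA]
          have d1 := hlow hf0 hfb hb hu0 (le_trans huv hvA)
          linarith
        · rcases le_or_gt (u+v) 1 with hw1 | hw1
          · rw [eval4 hf0 hfb hb (le_of_lt hwA) hw1, eval3 hf0 hfb hb (le_of_lt hvb) hvA]
            have d1 := hlow hf0 hfb hb hu0 (le_trans huv hvA)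
            have d2 := hP43 hf0 hfb hb (le_of_lt hwA)
            linarith
          · have hrw : drlmBackward3Slope f b (u+v) = drlmBackward3Slope f b (u+v-1) := by
              rw [← hper (u+v-1)]; norm_num
            rw [hrw]
            have hr0 : 0 ≤ u+v-1 := by linarith
            rcases le_or_gt u f with huf | huf
            · have hrf : u+v-1 ≤ f := by linarith
              rw [eval1 hf0 hfb hb hr0 hrf, eval1 hf0 hfb hb hu0 huf,
                eval3 hf0 hfb hb (le_of_lt hvb) hvA]
              rw [← sub_nonneg]
              have key : u/f + v/(1+f) - (u+v-1)/f
                  = ((b-f)*(1+f-v))/(f*((1+f)*(b-f))) := by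
                field_simp
                ring
              rw [key]
              exact div_nonneg (mul_nonneg (le_of_lt hbf) (by linarith)) (le_of_lt hD)
            · rcases le_or_gt u b with hub | hub
              · have hrf : u+v-1 ≤ f := by linarith
                rw [eval1 hf0 hfb hb hr0 hrf, eval2 hf0 hfb hb (le_of_lt huf) hub,
                  eval3 hf0 hfb hb (le_of_lt hvb) hvA]
                rw [← sub_nonneg]
                have key : (1 + (1+f-b)*(u-f)/((1+f)*(f-b))) + v/(1+f) - (u+v-1)/f
                    = ((b-f)*(1+f-b-v) + (b-u)*((1+f)*(b-f)+f*(1+f-b)))/(f*((1+f)*(b-f))) := by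
                  field_simp
                  ring
                rw [key]
                refine div_nonneg ?_ (le_of_lt hD)
                have t1 : (0:ℝ) ≤ (b-f)*(1+f-b-v) := mul_nonneg (le_of_lt hbf) (by linarith)
                have t2 : (0:ℝ) ≤ (b-u)*((1+f)*(b-f)+f*(1+f-b)) :=
                  mul_nonneg (by linarith) (le_of_lt hm1)
                linarith
              · rcases le_or_gt (u+v-1) f with hrf | hrf
                · rw [eval1 hf0 hfb hb hr0 hrf, eval3 hf0 hfb hb (le_of_lt hub) (le_trans huv hvA),
                    eval3 hf0 hfb hb (le_of_lt hvb) hvA]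
                  rw [← sub_nonneg]
                  have key : u/(1+f) + v/(1+f) - (u+v-1)/f
                      = ((b-f)*(f-(u+v-1)))/(f*((1+f)*(b-f))) := by
                    field_simp
                    ring
                  rw [key]
                  exact div_nonneg (mul_nonneg (le_of_lt hbf) (by linarith)) (le_of_lt hD)
                · rcases le_or_gt (u+v-1) b with hrb | hrb
                  · rw [eval2 hf0 hfb hb (le_of_lt hrf) hrb,
                      eval3 hf0 hfb hb (le_of_lt hub) (le_trans huv hvA),
                      eval3 hf0 hfb hb (le_of_lt hvb) hvA]
                    rw [← sub_nonneg]
                    have key : u/(1+f) + v/(1+f) - (1 + (1+f-b)*((u+v-1)-f)/((1+f)*(f-b)))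
                        = (((u+v-1)-f)*f)/(f*((1+f)*(b-f))) := by
                      field_simp
                      ring
                    rw [key]
                    exact div_nonneg (mul_nonneg (by linarith) (le_of_lt hf0)) (le_of_lt hD)
                  · have hrA : u+v-1 ≤ 1+f-b := by linarith
                    rw [eval3 hf0 hfb hb (le_of_lt hrb) hrA,
                      eval3 hf0 hfb hb (le_of_lt hub) (le_trans huv hvA),
                      eval3 hf0 hfb hb (le_of_lt hvb) hvA]
                    rw [← sub_nonneg]
                    have key : u/(1+f) + v/(1+f) - (u+v-1)/(1+f)
                        = (f*(b-f))/(f*((1+f)*(b-f))) := by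
                      field_simp
                      ring
                    rw [key]
                    exact div_nonneg (mul_nonneg (le_of_lt hf0) (le_of_lt hbf)) (le_of_lt hD)
      · -- C4 : v in (A, 1)
        rcases le_or_gt (u+v) 1 with hw1 | hw1
        · rcases le_or_gt u f with huf | huf
          · rw [eval1 hf0 hfb hb hu0 huf, eval4 hf0 hfb hb (le_of_lt hvA) (le_of_lt hv1),
              eval4 hf0 hfb hb (by linarith) hw1]
            rw [← sub_nonneg]
            have key : u/f + (1+f-b)*(v-1)/((1+f)*(f-b)) - (1+f-b)*((u+v)-1)/((1+f)*(f-b))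
                = (u*((1+f)*(b-f)+f*(1+f-b)))/(f*((1+f)*(b-f))) := by
              field_simp
              ring
            rw [key]
            exact div_nonneg (mul_nonneg hu0 (le_of_lt hm1)) (le_of_lt hD)
          · have hub : u ≤ b := by linarith
            rw [eval2 hf0 hfb hb (le_of_lt huf) hub, eval4 hf0 hfb hb (le_of_lt hvA) (le_of_lt hv1),
              eval4 hf0 hfb hb (by linarith) hw1]
            rw [← sub_nonneg]
            have key : (1 + (1+f-b)*(u-f)/((1+f)*(f-b))) + (1+f-b)*(v-1)/((1+f)*(f-b))
                - (1+f-b)*((u+v)-1)/((1+f)*(f-b))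
                = (f*((1+f)*(b-f)) + f^2*(1+f-b))/(f*((1+f)*(b-f))) := by
              field_simp
              ring
            rw [key]
            exact div_nonneg (by nlinarith) (le_of_lt hD)
        · have hrw : drlmBackward3Slope f b (u+v) = drlmBackward3Slope f b (u+v-1) := by
            rw [← hper (u+v-1)]; norm_num
          rw [hrw]
          have hr0 : 0 ≤ u+v-1 := by linarith
          have hru : u+v-1 < u := by linarith
          rcases le_or_gt u f with huf | huf
          · rw [eval1 hf0 hfb hb hr0 (by linarith), eval1 hf0 hfb hb hu0 huf,
              eval4 hf0 hfb hb (le_of_lt hvA) (le_of_lt hv1)]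
            rw [← sub_nonneg]
            have key : u/f + (1+f-b)*(v-1)/((1+f)*(f-b)) - (u+v-1)/f
                = ((1-v)*((1+f)*(b-f)+f*(1+f-b)))/(f*((1+f)*(b-f))) := by
              field_simp
              ring
            rw [key]
            exact div_nonneg (mul_nonneg (by linarith) (le_of_lt hm1)) (le_of_lt hD)
          · rcases le_or_gt u b with hub | hub
            · rcases le_or_gt (u+v-1) f with hrf | hrf
              · rw [eval1 hf0 hfb hb hr0 hrf, eval2 hf0 hfb hb (le_of_lt huf) hub,
                  eval4 hf0 hfb hb (le_of_lt hvA) (le_of_lt hv1)]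
                rw [← sub_nonneg]
                have key : (1 + (1+f-b)*(u-f)/((1+f)*(f-b))) + (1+f-b)*(v-1)/((1+f)*(f-b))
                    - (u+v-1)/f
                    = ((f-(u+v-1))*((1+f)*(b-f)+f*(1+f-b)))/(f*((1+f)*(b-f))) := by
                  field_simp
                  ring
                rw [key]
                exact div_nonneg (mul_nonneg (by linarith) (le_of_lt hm1)) (le_of_lt hD)
              · rw [eval2 hf0 hfb hb (le_of_lt hrf) (by linarith),
                  eval2 hf0 hfb hb (le_of_lt huf) hub,
                  eval4 hf0 hfb hb (le_of_lt hvA) (le_of_lt hv1)]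
                exact le_of_eq (by ring)
            · rcases le_or_gt u (1+f-b) with huA | huA
              · have hrf : f < u+v-1 := by linarith
                rcases le_or_gt (u+v-1) b with hrb | hrb
                · rw [eval2 hf0 hfb hb (le_of_lt hrf) hrb,
                    eval3 hf0 hfb hb (le_of_lt hub) huA,
                    eval4 hf0 hfb hb (le_of_lt hvA) (le_of_lt hv1)]
                  rw [← sub_nonneg]
                  have key : u/(1+f) + (1+f-b)*(v-1)/((1+f)*(f-b))
                      - (1 + (1+f-b)*((u+v-1)-f)/((1+f)*(f-b)))
                      = ((u-b)*f)/(f*((1+f)*(b-f))) := by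
                    field_simp
                    ring
                  rw [key]
                  exact div_nonneg (mul_nonneg (by linarith) (le_of_lt hf0)) (le_of_lt hD)
                · have hrA : u+v-1 ≤ 1+f-b := by linarith
                  rw [eval3 hf0 hfb hb (le_of_lt hrb) hrA,
                    eval3 hf0 hfb hb (le_of_lt hub) huA,
                    eval4 hf0 hfb hb (le_of_lt hvA) (le_of_lt hv1)]
                  rw [← sub_nonneg]
                  have key : u/(1+f) + (1+f-b)*(v-1)/((1+f)*(f-b)) - (u+v-1)/(1+f)
                      = ((1-v)*f)/(f*((1+f)*(b-f))) := by
                    field_simp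
                    ring
                  rw [key]
                  exact div_nonneg (mul_nonneg (by linarith) (le_of_lt hf0)) (le_of_lt hD)
              · have hrb : b < u+v-1 := by nlinarith
                rcases le_or_gt (u+v-1) (1+f-b) with hrA | hrA
                · rw [eval3 hf0 hfb hb (le_of_lt hrb) hrA,
                    eval4 hf0 hfb hb (le_of_lt huA) (le_of_lt hu1),
                    eval4 hf0 hfb hb (le_of_lt hvA) (le_of_lt hv1)]
                  rw [← sub_nonneg]
                  have key : (1+f-b)*(u-1)/((1+f)*(f-b)) + (1+f-b)*(v-1)/((1+f)*(f-b))
                      - (u+v-1)/(1+f)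
                      = (((1+f-b)-(u+v-1))*f)/(f*((1+f)*(b-f))) := by
                    field_simp
                    ring
                  rw [key]
                  exact div_nonneg (mul_nonneg (by linarith) (le_of_lt hf0)) (le_of_lt hD)
                · rw [eval4 hf0 hfb hb (le_of_lt hrA) (by linarith),
                    eval4 hf0 hfb hb (le_of_lt huA) (le_of_lt hu1),
                    eval4 hf0 hfb hb (le_of_lt hvA) (le_of_lt hv1)]
                  exact le_of_eq (by ring)

lemma subadd (hf0 : 0 < f) (hfb : f < b) (hb : b ≤ (1+f)/4) (x y : ℝ) :
    drlmBackward3Slope f b (x+y) ≤ drlmBackward3Slope f b x + drlmBackward3Slope f b y := by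
  have hx : drlmBackward3Slope f b x = drlmBackward3Slope f b (Int.fract x) :=
    (fract_self_eval x).symm
  have hy : drlmBackward3Slope f b y = drlmBackward3Slope f b (Int.fract y) :=
    (fract_self_eval y).symm
  have hxy : drlmBackward3Slope f b (x+y)
      = drlmBackward3Slope f b (Int.fract x + Int.fract y) := by
    rw [← fract_self_eval (x+y), fract_add_eq, fract_self_eval]
  rw [hx, hy, hxy]
  rcases le_total (Int.fract x) (Int.fract y) with h | h
  · exact subadd_core hf0 hfb hb (Int.fract_nonneg x) h (Int.fract_lt_one y)
  · rw [add_comm (Int.fract x), add_comm (drlmBackward3Slope f b (Int.fract x))]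
    exact subadd_core hf0 hfb hb (Int.fract_nonneg y) h (Int.fract_lt_one x)

lemma nonneg (hf0 : 0 < f) (hfb : f < b) (hb : b ≤ (1+f)/4) (x : ℝ) :
    0 ≤ drlmBackward3Slope f b x := by
  have h1f : (0:ℝ) < 1+f := by linarith
  have hbf : (0:ℝ) < b - f := by linarith
  rw [← fract_self_eval x]
  set t := Int.fract x with ht
  have ht0 : 0 ≤ t := Int.fract_nonneg x
  have ht1 : t < 1 := Int.fract_lt_one x
  rcases le_or_gt t f with h | h
  · rw [eval1 hf0 hfb hb ht0 h]; positivity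
  · rcases le_or_gt t b with h2 | h2
    · rw [eval2 hf0 hfb hb (le_of_lt h) h2]
      have key : 1 + (1+f-b)*(t-f)/((1+f)*(f-b))
          = ((1+f)*(b-f) - (1+f-b)*(t-f))/((1+f)*(b-f)) := by
        have h1fne : (1:ℝ)+f ≠ 0 := ne_of_gt h1f
        have hfbne : f - b ≠ 0 := by intro hc; rw [sub_eq_zero] at hc; linarith
        field_simp
        ring
      rw [key]
      apply div_nonneg _ (le_of_lt (mul_pos h1f hbf))
      nlinarith
    · rcases le_or_gt t (1+f-b) with h3 | h3
      · rw [eval3 hf0 hfb hb (le_of_lt h2) h3]; positivity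
      · rw [eval4 hf0 hfb hb (le_of_lt h3) (le_of_lt ht1)]
        apply div_nonneg_of_nonpos (by nlinarith) (by nlinarith)

lemma zero_eval (hf0 : 0 < f) (hfb : f < b) (hb : b ≤ (1+f)/4) :
    drlmBackward3Slope f b 0 = 0 := by
  rw [eval1 hf0 hfb hb le_rfl (le_of_lt hf0)]
  simp

lemma symmetry (hf0 : 0 < f) (hfb : f < b) (hb : b ≤ (1+f)/4) (x : ℝ) :
    drlmBackward3Slope f b x + drlmBackward3Slope f b (f - x) = 1 := by
  have h1f : (0:ℝ) < 1+f := by linarith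
  have hbf : (0:ℝ) < b - f := by linarith
  have hf3 : f < 1/3 := by linarith
  have hb3 : b < 1/3 := by linarith
  have hfne : f ≠ 0 := ne_of_gt hf0
  have h1fne : (1:ℝ)+f ≠ 0 := ne_of_gt h1f
  rw [← fract_self_eval x]
  have hfx : drlmBackward3Slope f b (f - x)
      = drlmBackward3Slope f b (f - Int.fract x) := by
    rw [← fract_self_eval (f-x), ← fract_self_eval (f - Int.fract x)]
    congr 1
    have : f - x = f - Int.fract x + (-⌊x⌋ : ℤ) := by
      push_cast
      have := Int.fract_add_floor x
      linarith
    rw [this, Int.fract_add_intCast]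
  rw [hfx]
  set t := Int.fract x with htdef
  have ht0 : 0 ≤ t := Int.fract_nonneg x
  have ht1 : t < 1 := Int.fract_lt_one x
  rcases le_or_gt t f with h | h
  · rw [eval1 hf0 hfb hb ht0 h, eval1 hf0 hfb hb (by linarith) (by linarith)]
    field_simp
    ring
  · have hshift : drlmBackward3Slope f b (f - t)
        = drlmBackward3Slope f b (1 + f - t) := by
      rw [← periodic (f - t)]
      congr 1
      ring
    rw [hshift]
    rcases le_or_gt t b with h2 | h2
    · rw [eval2 hf0 hfb hb (le_of_lt h) h2,
        eval4 hf0 hfb hb (by linarith) (by linarith)]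
      have hfbne : f - b ≠ 0 := by intro hc; rw [sub_eq_zero] at hc; linarith
      field_simp
      ring
    · rcases le_or_gt t (1+f-b) with h3 | h3
      · rw [eval3 hf0 hfb hb (le_of_lt h2) h3,
          eval3 hf0 hfb hb (by linarith) (by linarith)]
        field_simp
        ring
      · rw [eval4 hf0 hfb hb (le_of_lt h3) (le_of_lt ht1),
          eval2 hf0 hfb hb (by linarith) (by linarith)]
        have hfbne : f - b ≠ 0 := by intro hc; rw [sub_eq_zero] at hc; linarith
        field_simp
        ring

lemma minimal (hf0 : 0 < f) (hfb : f < b) (hb : b ≤ (1+f)/4) :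
    MinimalValid f (drlmBackward3Slope f b) :=
  ⟨nonneg hf0 hfb hb, zero_eval hf0 hfb hb, fun x => periodic x,
    fun x y => subadd hf0 hfb hb x y, fun x => symmetry hf0 hfb hb x⟩

lemma cauchy_mul (g : ℝ → ℝ) (L : ℝ) (hL : 0 < L)
    (hadd : ∀ x y, 0 ≤ x → 0 ≤ y → x + y ≤ L → g x + g y = g (x+y)) :
    ∀ (n : ℕ) (t : ℝ), 0 ≤ t → (n:ℝ)*t ≤ L → g ((n:ℝ)*t) = (n:ℝ) * g t := by
  have hg0 : g 0 = 0 := by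
    have := hadd 0 0 le_rfl le_rfl (by linarith)
    simpa using this
  intro n
  induction n with
  | zero => intro t _ _; simpa using hg0
  | succ n ih =>
    intro t ht hle
    push_cast at hle ⊢
    have hnt : (n:ℝ)*t ≤ L := by nlinarith
    have h1 : g ((n:ℝ)*t) + g t = g ((n:ℝ)*t + t) :=
      hadd _ t (by positivity) ht (by linarith)
    have h2 := ih t ht hnt
    rw [show ((n:ℝ)+1)*t = (n:ℝ)*t + t by ring, ← h1, h2]
    ring

lemma cauchy_linear (g : ℝ → ℝ) (L C : ℝ) (hL : 0 < L)
    (hbd : ∀ x, 0 ≤ x → x ≤ L → |g x| ≤ C)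
    (hadd : ∀ x y, 0 ≤ x → 0 ≤ y → x + y ≤ L → g x + g y = g (x+y)) :
    ∀ x, 0 ≤ x → x ≤ L → g x = (g L / L) * x := by
  have hC0 : 0 ≤ C := by
    have h1 := hbd L (le_of_lt hL) le_rfl
    exact le_trans (abs_nonneg _) h1
  intro x hx0 hxL
  set σ := g L / L with hσ
  set M := C + |σ| * L with hM
  have hM0 : 0 ≤ M := by positivity
  have key : ∀ q : ℕ, 1 ≤ q → |g x - σ * x| ≤ M / q := by
    intro q hq
    have hq0 : (0:ℝ) < q := by exact_mod_cast hq
    set t := L / q with htdef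
    have ht0 : 0 < t := div_pos hL hq0
    have hqt : (q:ℝ) * t = L := by
      rw [htdef, mul_comm, div_mul_cancel₀ _ (ne_of_gt hq0)]
    set p : ℕ := (⌊x / t⌋).toNat with hp
    have hfl0 : (0:ℤ) ≤ ⌊x / t⌋ := Int.floor_nonneg.2 (by positivity)
    have hpc : (p:ℝ) = (⌊x / t⌋ : ℝ) := by
      rw [hp]
      exact_mod_cast Int.toNat_of_nonneg hfl0
    have hple : (p:ℝ) * t ≤ x := by
      have h1 : (p:ℝ) ≤ x / t := by rw [hpc]; exact Int.floor_le _
      calc (p:ℝ) * t ≤ (x/t) * t := by nlinarith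
        _ = x := by field_simp
    have hplt : x - (p:ℝ) * t < t := by
      have h1 : x / t < (p:ℝ) + 1 := by rw [hpc]; exact Int.lt_floor_add_one (x/t)
      have := (div_lt_iff₀ ht0).1 h1
      nlinarith
    set s := x - (p:ℝ)*t with hs
    have hs0 : 0 ≤ s := by linarith
    have hgL : g L = (q:ℝ) * g t := by
      rw [← hqt]
      exact cauchy_mul g L hL hadd q t (le_of_lt ht0) (le_of_eq hqt)
    have hgpt : g ((p:ℝ)*t) = (p:ℝ) * g t :=
      cauchy_mul g L hL hadd p t (le_of_lt ht0) (by nlinarith)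
    have hx' : x = (p:ℝ)*t + s := by rw [hs]; ring
    have hsplitg : g x = g ((p:ℝ)*t) + g s := by
      rw [hx']
      exact (hadd ((p:ℝ)*t) s (by positivity) hs0 (by rw [← hx']; exact hxL)).symm
    have hgs : |g s| ≤ C / q := by
      have h1 : (q:ℝ) * s ≤ L := by nlinarith
      have h2 : g ((q:ℝ)*s) = (q:ℝ) * g s := cauchy_mul g L hL hadd q s hs0 h1
      have h3 := hbd ((q:ℝ)*s) (by positivity) h1
      rw [h2, abs_mul, abs_of_pos hq0] at h3
      rw [le_div_iff₀ hq0]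
      linarith
    -- σ * (p*t) = p * g t
    have hσpt : σ * ((p:ℝ)*t) = (p:ℝ) * g t := by
      have hl0 : L ≠ 0 := ne_of_gt hL
      have hq0' : (q:ℝ) ≠ 0 := ne_of_gt hq0
      rw [hσ, hgL]
      field_simp
      rw [← hqt]
      ring
    have hdiff : g x - σ * x = g s - σ * s := by
      rw [hsplitg, hgpt]
      have : σ * x = σ * ((p:ℝ)*t) + σ * s := by rw [hs]; ring
      rw [this, hσpt]
      ring
    rw [hdiff]
    have h4 : |g s - σ * s| ≤ |g s| + |σ| * |s| := by
      calc |g s - σ * s| ≤ |g s| + |σ * s| := abs_sub _ _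
        _ = |g s| + |σ| * |s| := by rw [abs_mul]
    have h5 : |s| ≤ t := by rw [abs_of_nonneg hs0]; linarith
    have h6 : |σ| * |s| ≤ |σ| * t := by
      apply mul_le_mul_of_nonneg_left h5 (abs_nonneg _)
    have h7 : |σ| * t = |σ| * L / q := by rw [htdef]; ring
    have h8 : C / q + |σ| * L / q = M / q := by rw [hM]; ring
    calc |g s - σ * s| ≤ |g s| + |σ| * |s| := h4
      _ ≤ C/q + |σ| * t := by linarith
      _ = M / q := by rw [h7, ← h8]
  by_contra hne
  have hd0 : 0 < |g x - σ * x| := by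
    rcases lt_or_eq_of_le (abs_nonneg (g x - σ * x)) with h | h
    · exact h
    · exfalso; apply hne
      have := abs_eq_zero.1 h.symm
      linarith
  obtain ⟨q, hq⟩ := exists_nat_gt (M / |g x - σ * x|)
  have hq1 : 1 ≤ q := by
    by_contra hq1
    push_neg at hq1
    interval_cases q
    · norm_num at hq
      nlinarith [div_nonneg hM0 (le_of_lt hd0)]
  have h1 := key q hq1
  have hq0 : (0:ℝ) < q := by exact_mod_cast hq1
  have h2 : M < q * |g x - σ * x| := by
    rw [div_lt_iff₀ hd0] at hq
    linarith
  have h3 : M / q < |g x - σ * x| := by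
    rw [div_lt_iff₀ hq0]
    linarith [h2]
  linarith

lemma padd1 (hf0 : 0 < f) (hfb : f < b) (hb : b ≤ (1+f)/4)
    {x y : ℝ} (hx : 0 ≤ x) (hy : 0 ≤ y) (hxy : x + y ≤ f) :
    drlmBackward3Slope f b (x+y) = drlmBackward3Slope f b x + drlmBackward3Slope f b y := by
  rw [eval1 hf0 hfb hb hx (by linarith), eval1 hf0 hfb hb hy (by linarith),
    eval1 hf0 hfb hb (by linarith) hxy]
  ring

lemma padd3 (hf0 : 0 < f) (hfb : f < b) (hb : b ≤ (1+f)/4)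
    {x y : ℝ} (hx : b ≤ x) (hy : b ≤ y) (hxy : x + y ≤ 1+f-b) :
    drlmBackward3Slope f b (x+y) = drlmBackward3Slope f b x + drlmBackward3Slope f b y := by
  rw [eval3 hf0 hfb hb hx (by linarith), eval3 hf0 hfb hb hy (by linarith),
    eval3 hf0 hfb hb (by linarith) hxy]
  ring

lemma padd4 (hf0 : 0 < f) (hfb : f < b) (hb : b ≤ (1+f)/4)
    {u v : ℝ} (hu : 0 ≤ u) (hv : 0 ≤ v) (huv : u + v ≤ b - f) :
    drlmBackward3Slope f b ((1-u)+(1-v))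
      = drlmBackward3Slope f b (1-u) + drlmBackward3Slope f b (1-v) := by
  have hb3 : b < 1/3 := by linarith
  have hper : drlmBackward3Slope f b ((1-u)+(1-v))
      = drlmBackward3Slope f b (1-(u+v)) := by
    rw [← periodic (1-(u+v))]
    congr 1
    ring
  rw [hper, eval4 hf0 hfb hb (by linarith) (by linarith),
    eval4 hf0 hfb hb (by linarith) (by linarith),
    eval4 hf0 hfb hb (by linarith) (by linarith)]
  ring

lemma extreme_half (hf0 : 0 < f) (hfb : f < b) (hb : b ≤ (1+f)/4)
    (π₁ π₂ : ℝ → ℝ) (h1 : MinimalValid f π₁) (h2 : MinimalValid f π₂)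
    (havg : ∀ x, drlmBackward3Slope f b x = (π₁ x + π₂ x) / 2) :
    π₁ = drlmBackward3Slope f b := by
  obtain ⟨h1pos, h1zero, h1per, h1sub, h1sym⟩ := h1
  obtain ⟨h2pos, h2zero, h2per, h2sub, h2sym⟩ := h2
  have h1f : (0:ℝ) < 1+f := by linarith
  have hbf : (0:ℝ) < b - f := by linarith
  have hf3 : f < 1/3 := by linarith
  have hb3 : b < 1/3 := by linarith
  have hfne : f ≠ 0 := ne_of_gt hf0
  have h1fne : (1:ℝ)+f ≠ 0 := ne_of_gt h1f
  have hbfne : b - f ≠ 0 := ne_of_gt hbf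
  have hfbne : f - b ≠ 0 := by intro hc; rw [sub_eq_zero] at hc; linarith
  -- upper bound
  have h1le : ∀ x, π₁ x ≤ 1 := by
    intro x
    have := h1sym x
    have := h1pos (f - x)
    linarith
  have h1bd : ∀ x, |π₁ x| ≤ 1 := fun x => abs_le.2 ⟨by linarith [h1pos x], h1le x⟩
  have h1fval : π₁ f = 1 := by
    have := h1sym 0
    rw [sub_zero, h1zero] at this
    linarith
  -- integer periodicity
  have hper1 : ∀ (n : ℤ) (x : ℝ), π₁ (x + n) = π₁ x := by
    intro n
    induction n using Int.induction_on with
    | zero => intro x; norm_num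
    | succ k ih =>
      intro x
      have e : x + ((k:ℤ)+1 : ℤ) = (x + (k:ℤ)) + 1 := by push_cast; ring
      rw [e, h1per, ih]
    | pred k ih =>
      intro x
      have h := h1per (x + (-(k:ℤ)-1 : ℤ))
      have e : (x + (-(k:ℤ)-1 : ℤ)) + 1 = x + (-(k:ℤ) : ℤ) := by push_cast; ring
      rw [e] at h
      rw [← h, ih]
  have hfr1 : ∀ x : ℝ, π₁ (Int.fract x) = π₁ x := by
    intro x
    have e : x = Int.fract x + (⌊x⌋ : ℤ) := by
      have := Int.fract_add_floor x
      linarith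
    conv_rhs => rw [e]
    rw [hper1]
  -- additivity transfer
  have htrans : ∀ x y : ℝ,
      drlmBackward3Slope f b (x+y) = drlmBackward3Slope f b x + drlmBackward3Slope f b y →
      π₁ (x+y) = π₁ x + π₁ y := by
    intro x y hxy
    have a1 := h1sub x y
    have a2 := h2sub x y
    have e1 := havg x
    have e2 := havg y
    have e3 := havg (x+y)
    linarith
  -- segment [0, f]
  have hadd1 : ∀ x y, 0 ≤ x → 0 ≤ y → x + y ≤ f → π₁ x + π₁ y = π₁ (x+y) := by
    intro x y hx hy hxy
    exact (htrans x y (padd1 hf0 hfb hb hx hy hxy)).symm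
  have hseg1 : ∀ t, 0 ≤ t → t ≤ f → π₁ t = t / f := by
    intro t ht0 ht1
    have := cauchy_linear π₁ f 1 hf0 (fun x _ _ => h1bd x) hadd1 t ht0 ht1
    rw [h1fval] at this
    rw [this]
    ring
  -- middle segment
  have hmid : ∀ x y, b ≤ x → b ≤ y → x + y ≤ 1+f-b → π₁ x + π₁ y = π₁ (x+y) := by
    intro x y hx hy hxy
    exact (htrans x y (padd3 hf0 hfb hb hx hy hxy)).symm
  set ψ : ℝ → ℝ := fun t => π₁ (t + b) - π₁ b with hψ
  set L₂ : ℝ := 1+f-3*b with hL₂def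
  have hL₂ : 0 < L₂ := by rw [hL₂def]; linarith
  have hψadd : ∀ x y, 0 ≤ x → 0 ≤ y → x + y ≤ L₂ → ψ x + ψ y = ψ (x+y) := by
    intro x y hx hy hxy
    rw [hL₂def] at hxy
    have e1 : π₁ (x+b) + π₁ (y+b) = π₁ ((x+b)+(y+b)) :=
      hmid (x+b) (y+b) (by linarith) (by linarith) (by linarith)
    have e2 : π₁ (x+y+b) + π₁ b = π₁ ((x+y+b)+b) :=
      hmid (x+y+b) b (by linarith) le_rfl (by linarith)
    have e3 : (x+b)+(y+b) = (x+y+b)+b := by ring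
    rw [e3] at e1
    simp only [hψ]
    linarith
  have hψbd : ∀ x, 0 ≤ x → x ≤ L₂ → |ψ x| ≤ 2 := by
    intro x _ _
    simp only [hψ]
    have := h1pos (x+b)
    have := h1le (x+b)
    have := h1pos b
    have := h1le b
    rw [abs_le]
    constructor <;> linarith
  set σ₂ : ℝ := ψ L₂ / L₂ with hσ₂def
  have hψlin : ∀ t, 0 ≤ t → t ≤ L₂ → ψ t = σ₂ * t :=
    cauchy_linear ψ L₂ 2 hL₂ hψbd hψadd
  -- π₁ b = σ₂ * b
  have h2b : π₁ b + π₁ b = π₁ (b + b) := hmid b b le_rfl le_rfl (by linarith)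
  have hval2b : π₁ (b+b) = π₁ b + σ₂ * b := by
    have := hψlin b (by linarith) (by rw [hL₂def]; linarith)
    simp only [hψ] at this
    linarith
  have hπ₁b : π₁ b = σ₂ * b := by linarith
  -- value on the whole middle interval
  have hmidval : ∀ z, b ≤ z → z ≤ 1+f-b → π₁ z = σ₂ * z := by
    intro z hz1 hz2
    rcases le_or_gt z (1+f-2*b) with h | h
    · have := hψlin (z - b) (by linarith) (by rw [hL₂def]; linarith)
      simp only [hψ] at this
      have e : z - b + b = z := by ring
      rw [e] at this
      have : π₁ z = π₁ b + σ₂ * (z - b) := by linarith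
      rw [this, hπ₁b]
      ring
    · have e1 : π₁ (z-b) + π₁ b = π₁ ((z-b)+b) :=
        hmid (z-b) b (by linarith) le_rfl (by linarith)
      have e : z - b + b = z := by ring
      rw [e] at e1
      have hzb : π₁ (z-b) = σ₂ * (z-b) := by
        have := hψlin (z - b - b) (by linarith) (by rw [hL₂def]; linarith)
        simp only [hψ] at this
        have e2 : z - b - b + b = z - b := by ring
        rw [e2] at this
        have : π₁ (z-b) = π₁ b + σ₂ * (z - b - b) := by linarith
        rw [this, hπ₁b]
        ring
      rw [← e1, hzb, hπ₁b]
      ring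
  -- last segment via reflection
  set h3 : ℝ → ℝ := fun u => π₁ (1 - u) with hh3
  set L₃ : ℝ := b - f with hL₃def
  have hL₃ : 0 < L₃ := hbf
  have h3add : ∀ x y, 0 ≤ x → 0 ≤ y → x + y ≤ L₃ → h3 x + h3 y = h3 (x+y) := by
    intro x y hx hy hxy
    rw [hL₃def] at hxy
    have e1 : π₁ ((1-x)+(1-y)) = π₁ (1-x) + π₁ (1-y) :=
      htrans (1-x) (1-y) (padd4 hf0 hfb hb hx hy hxy)
    have e2 : π₁ ((1-x)+(1-y)) = π₁ (1-(x+y)) := by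
      have e : (1-x)+(1-y) = (1-(x+y)) + (1:ℤ) := by push_cast; ring
      rw [e, hper1]
    simp only [hh3]
    rw [← e2, e1]
  have h3bd : ∀ x, 0 ≤ x → x ≤ L₃ → |h3 x| ≤ 1 := fun x _ _ => h1bd _
  set σ₃ : ℝ := h3 L₃ / L₃ with hσ₃def
  have h3lin : ∀ t, 0 ≤ t → t ≤ L₃ → h3 t = σ₃ * t :=
    cauchy_linear h3 L₃ 1 hL₃ h3bd h3add
  have hlastval : ∀ u, 0 ≤ u → u ≤ b - f → π₁ (1-u) = σ₃ * u := by
    intro u h0 h1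
    have := h3lin u h0 (by rw [hL₃def]; linarith)
    simpa only [hh3] using this
  -- segment [f,b] via symmetry
  have hseg2 : ∀ y, f ≤ y → y ≤ b → π₁ y = 1 - σ₃ * (y - f) := by
    intro y hy1 hy2
    have hsym := h1sym y
    have e1 : π₁ (f - y) = π₁ (1 - (y - f)) := by
      have e : 1 - (y - f) = (f - y) + (1:ℤ) := by push_cast; ring
      rw [e, hper1]
    have e2 : π₁ (1 - (y-f)) = σ₃ * (y - f) := hlastval (y-f) (by linarith) (by linarith)
    rw [e1, e2] at hsym
    linarith
  -- determine the slopes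
  have e_b : σ₂ * b = 1 - σ₃ * (b - f) := by
    have := hseg2 b (le_of_lt hfb) le_rfl
    rw [← this, hmidval b le_rfl (by linarith)]
  have e_A : σ₂ * (1+f-b) = σ₃ * (b - f) := by
    have e1 : π₁ (1 - (b-f)) = σ₃ * (b-f) := hlastval (b-f) (by linarith) le_rfl
    have e2 : (1:ℝ) - (b-f) = 1+f-b := by ring
    rw [e2] at e1
    rw [← e1, hmidval (1+f-b) (by linarith) le_rfl]
  have hσ₂val : σ₂ = 1/(1+f) := by
    have hsum : σ₂ * b + σ₂ * (1+f-b) = σ₂ * (1+f) := by ring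
    have : σ₂ * (1+f) = 1 := by linarith
    field_simp
    linarith
  have hσ₃val : σ₃ = (1+f-b)/((1+f)*(b-f)) := by
    have : σ₃ * (b-f) = (1+f-b)/(1+f) := by
      rw [← e_A, hσ₂val]
      ring
    field_simp at this ⊢
    rw [eq_div_iff (sub_ne_zero.2 (ne_of_gt hfb))]
    linarith
  -- conclude
  funext x
  rw [← hfr1 x, ← fract_self_eval x]
  set t := Int.fract x with htdef
  have ht0 : 0 ≤ t := Int.fract_nonneg x
  have ht1 : t < 1 := Int.fract_lt_one x
  rcases le_or_gt t f with h | h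
  · rw [hseg1 t ht0 h, eval1 hf0 hfb hb ht0 h]
  · rcases le_or_gt t b with h2 | h2
    · rw [hseg2 t (le_of_lt h) h2, eval2 hf0 hfb hb (le_of_lt h) h2, hσ₃val]
      have hbfne' : b - f ≠ 0 := sub_ne_zero.2 (ne_of_gt hfb)
      field_simp
      ring
    · rcases le_or_gt t (1+f-b) with h3' | h3'
      · rw [hmidval t (le_of_lt h2) h3', eval3 hf0 hfb hb (le_of_lt h2) h3', hσ₂val]
        ring
      · have e1 : π₁ t = π₁ (1 - (1 - t)) := by norm_num
        rw [e1, hlastval (1-t) (by linarith) (by linarith),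
          eval4 hf0 hfb hb (le_of_lt h3') (le_of_lt ht1), hσ₃val]
        have hbfne' : b - f ≠ 0 := sub_ne_zero.2 (ne_of_gt hfb)
        field_simp
        ring

end DrlmAux

theorem drlmBackward3Slope_extreme (f b : ℝ) (hf0 : 0 < f) (hfb : f < b)
    (hb : b ≤ (1 + f) / 4) :
    MinimalValid f (drlmBackward3Slope f b) ∧
    ∀ π₁ π₂ : ℝ → ℝ, MinimalValid f π₁ → MinimalValid f π₂ →
      (∀ x, drlmBackward3Slope f b x = (π₁ x + π₂ x) / 2) →
      π₁ = drlmBackward3Slope f b ∧ π₂ = drlmBackward3Slope f b := by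
  refine ⟨DrlmAux.minimal hf0 hfb hb, ?_⟩
  intro π₁ π₂ h1 h2 havg
  exact ⟨DrlmAux.extreme_half hf0 hfb hb π₁ π₂ h1 h2 havg,
    DrlmAux.extreme_half hf0 hfb hb π₂ π₁ h2 h1 (fun x => by rw [havg x]; ring)⟩
end

section
/- Let f and b be real numbers such that 0 < f < b ≤ (1+f)/4, and let π : ℝ → ℝ be the drlm_backward_3_slope function. Then π is a minimal valid function with parameter f; in particular π is nonnegative, π(0) = 0, π is periodic with period 1, π is subadditive, and π(x) + π(f−x) = 1 for all x ∈ ℝ. -/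
/-- Common-denominator numerator for `drlmBackward3Slope`. -/
noncomputable def d3sN (f b u : ℝ) : ℝ :=
  if u ≤ f then u * ((1 + f) * (b - f))
  else if u ≤ b then f * b - f * (1 + f - b) * u
  else if u ≤ 1 + f - b then u * (f * (b - f))
  else f * (1 + f - b) * (1 - u)

set_option maxHeartbeats 4000000 in
theorem drlmBackward3Slope_minimal (f b : ℝ) (hf0 : 0 < f) (hfb : f < b)
    (hb : b ≤ (1 + f) / 4) :
    MinimalValid f (drlmBackward3Slope f b) ∧
    (∀ x, 0 ≤ drlmBackward3Slope f b x) ∧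
    drlmBackward3Slope f b 0 = 0 ∧
    (∀ x, drlmBackward3Slope f b (x + 1) = drlmBackward3Slope f b x) ∧
    (∀ x y, drlmBackward3Slope f b (x + y) ≤
      drlmBackward3Slope f b x + drlmBackward3Slope f b y) ∧
    (∀ x, drlmBackward3Slope f b x + drlmBackward3Slope f b (f - x) = 1) := by
  have hb4 : 4 * b ≤ 1 + f := by linarith
  have hb0 : 0 < b := hf0.trans hfb
  have hf3 : 3 * f < 1 := by linarith
  have hb1 : b < 1 := by linarith
  have h1f : (0:ℝ) < 1 + f := by linarith
  have hbf : 0 < b - f := by linarith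
  have h1fb : b < 1 + f - b := by linarith
  have h1fb1 : 1 + f - b < 1 := by linarith
  have hf' : f ≠ 0 := ne_of_gt hf0
  have h1f' : (1+f) ≠ 0 := ne_of_gt h1f
  have hbf' : b - f ≠ 0 := ne_of_gt hbf
  have hfb' : f - b ≠ 0 := by intro h; apply hbf'; linarith
  have hD : 0 < f * ((1 + f) * (b - f)) := by positivity
  have hm : 0 < f * (1 + f - b) := by nlinarith
  have hmf : f * (1 + f - b) < f := by nlinarith
  have hmb : f * (1 + f - b) < b := hmf.trans hfb
  -- evaluation of the original function on [0,1)
  have pi_eq : ∀ u : ℝ, 0 ≤ u → u < 1 →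
      drlmBackward3Slope f b u = d3sN f b u / (f * ((1 + f) * (b - f))) := by
    intro u h0 h1
    have hu : Int.fract u = u := Int.fract_eq_self.2 ⟨h0, h1⟩
    simp only [drlmBackward3Slope, d3sN, hu]
    split_ifs with h₁ h₂ h₃
    · field_simp
    · field_simp; ring
    · field_simp
    · field_simp; ring
  have pi_fract : ∀ x : ℝ, drlmBackward3Slope f b x
      = d3sN f b (Int.fract x) / (f * ((1 + f) * (b - f))) := by
    intro x
    rw [← pi_eq (Int.fract x) (Int.fract_nonneg x) (Int.fract_lt_one x)]
    simp [drlmBackward3Slope, Int.fract_fract]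
  -- piecewise evaluation lemmas for the numerator (on closed overlapping pieces)
  have Ne1 : ∀ u : ℝ, u ≤ f → d3sN f b u = u * ((1 + f) * (b - f)) := by
    intro u h; simp only [d3sN]; rw [if_pos h]
  have Ne2 : ∀ u : ℝ, f ≤ u → u ≤ b → d3sN f b u = f * b - f * (1 + f - b) * u := by
    intro u h1 h2; simp only [d3sN]
    rcases le_or_gt u f with h | h
    · have hu : u = f := le_antisymm h h1
      rw [if_pos h, hu]; ring
    · rw [if_neg (not_le.2 h), if_pos h2]
  have Ne3 : ∀ u : ℝ, b ≤ u → u ≤ 1 + f - b → d3sN f b u = u * (f * (b - f)) := by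
    intro u h1 h2; simp only [d3sN]
    rw [if_neg (not_le.2 (lt_of_lt_of_le hfb h1))]
    rcases le_or_gt u b with h | h
    · have hu : u = b := le_antisymm h h1
      rw [if_pos h, hu]; ring
    · rw [if_neg (not_le.2 h), if_pos h2]
  have Ne4 : ∀ u : ℝ, 1 + f - b ≤ u → d3sN f b u = f * (1 + f - b) * (1 - u) := by
    intro u h1; simp only [d3sN]
    rw [if_neg (not_le.2 (by linarith : f < u)), if_neg (not_le.2 (by linarith : b < u))]
    rcases le_or_gt u (1 + f - b) with h | h
    · have hu : u = 1 + f - b := le_antisymm h h1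
      rw [if_pos h, hu]; ring
    · rw [if_neg (not_le.2 h)]
  -- nonnegativity of the numerator
  have N_nonneg : ∀ u : ℝ, 0 ≤ u → u < 1 → 0 ≤ d3sN f b u := by
    intro u h0 h1
    simp only [d3sN]
    split_ifs with h₁ h₂ h₃ <;> nlinarith [hm, hmf, hb0, hbf]
  -- subadditivity of the numerator
  have N_subadd : ∀ s t w : ℝ, 0 ≤ s → s < 1 → 0 ≤ t → t < 1 → 0 ≤ w → w < 1 →
      (w = s + t ∨ w = s + t - 1) →
      d3sN f b w ≤ d3sN f b s + d3sN f b t := by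
    intro s t w hs0 hs1 ht0 ht1 hw0 hw1 hw
    simp only [d3sN]
    have hb2 : 2 * b ≤ 1 + f := by linarith
    rcases hw with rfl | rfl <;> split_ifs <;>
      first
        | linarith
        | nlinarith [mul_nonneg hs0 hb0.le, mul_nonneg ht0 hb0.le,
            mul_nonneg hs0 hf0.le, mul_nonneg ht0 hf0.le]
  -- fract of a sum
  have fract_add : ∀ x y : ℝ, Int.fract (x + y) = Int.fract x + Int.fract y ∨
      Int.fract (x + y) = Int.fract x + Int.fract y - 1 := by
    intro x y
    have e : x + y = (Int.fract x + Int.fract y) + ((⌊x⌋ + ⌊y⌋ : ℤ) : ℝ) := by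
      push_cast
      have := Int.floor_add_fract x
      have := Int.floor_add_fract y
      linarith
    have e2 : Int.fract (x + y) = Int.fract (Int.fract x + Int.fract y) := by
      rw [e, Int.fract_add_intCast]
    rcases lt_or_ge (Int.fract x + Int.fract y) 1 with h | h
    · left
      rw [e2, Int.fract_eq_self.2 ⟨add_nonneg (Int.fract_nonneg x) (Int.fract_nonneg y), h⟩]
    · right
      have h2 : Int.fract x + Int.fract y - 1 < 1 := by
        have := Int.fract_lt_one x; have := Int.fract_lt_one y; linarith
      rw [e2, show Int.fract x + Int.fract y
          = (Int.fract x + Int.fract y - 1) + ((1:ℤ):ℝ) by push_cast; ring,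
        Int.fract_add_intCast, Int.fract_eq_self.2 ⟨by linarith, h2⟩]
      push_cast; ring
  -- the five properties
  have nonneg : ∀ x, 0 ≤ drlmBackward3Slope f b x := by
    intro x
    rw [pi_fract x]
    exact div_nonneg (N_nonneg _ (Int.fract_nonneg x) (Int.fract_lt_one x)) hD.le
  have zero : drlmBackward3Slope f b 0 = 0 := by
    simp [drlmBackward3Slope, Int.fract_zero, hf0.le]
  have per : ∀ x, drlmBackward3Slope f b (x + 1) = drlmBackward3Slope f b x := by
    intro x
    rw [pi_fract, pi_fract, show x + 1 = x + ((1:ℤ):ℝ) by push_cast; ring,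
      Int.fract_add_intCast]
  have subadd : ∀ x y, drlmBackward3Slope f b (x + y) ≤
      drlmBackward3Slope f b x + drlmBackward3Slope f b y := by
    intro x y
    rw [pi_fract x, pi_fract y, pi_fract (x + y), ← add_div,
      div_le_div_iff_of_pos_right hD]
    exact N_subadd _ _ _ (Int.fract_nonneg x) (Int.fract_lt_one x)
      (Int.fract_nonneg y) (Int.fract_lt_one y)
      (Int.fract_nonneg _) (Int.fract_lt_one _) (fract_add x y)
  have sym : ∀ x, drlmBackward3Slope f b x + drlmBackward3Slope f b (f - x) = 1 := by
    intro x
    have hs0 : 0 ≤ Int.fract x := Int.fract_nonneg x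
    have hs1 : Int.fract x < 1 := Int.fract_lt_one x
    set s := Int.fract x with hsdef
    have hfx : Int.fract (f - x) = Int.fract (f - s) := by
      rw [show f - x = (f - s) + ((-⌊x⌋ : ℤ) : ℝ) by
        push_cast; have := Int.floor_add_fract x; rw [hsdef]; linarith,
        Int.fract_add_intCast]
    rw [pi_fract x, pi_fract (f - x), ← hsdef, hfx, ← add_div,
      div_eq_one_iff_eq (ne_of_gt hD)]
    rcases le_or_gt s f with h | h
    · have hfs : Int.fract (f - s) = f - s :=
        Int.fract_eq_self.2 ⟨by linarith, by linarith⟩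
      rw [hfs, Ne1 s h, Ne1 (f - s) (by linarith)]
      ring
    · have hfs : Int.fract (f - s) = 1 + f - s := by
        rw [show f - s = (1 + f - s) + ((-1 : ℤ) : ℝ) by push_cast; ring,
          Int.fract_add_intCast, Int.fract_eq_self.2 ⟨by linarith, by linarith⟩]
      rw [hfs]
      rcases le_or_gt s b with h2 | h2
      · rw [Ne2 s h.le h2, Ne4 (1 + f - s) (by linarith)]
        ring
      · rcases le_or_gt s (1 + f - b) with h3 | h3
        · rw [Ne3 s h2.le h3, Ne3 (1 + f - s) (by linarith) (by linarith)]
          ring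
        · rw [Ne4 s h3.le, Ne2 (1 + f - s) (by linarith) (by linarith)]
          ring
  exact ⟨⟨nonneg, zero, per, subadd, sym⟩, nonneg, zero, per, subadd, sym⟩
end

section
/- Let f and b be real numbers such that 0 < f < b ≤ (1+f)/4, and let π : ℝ → ℝ be the drlm_backward_3_slope function. Then for all x, y ∈ ℝ with 0 ≤ x ≤ f, 0 ≤ y ≤ f, and 0 ≤ x + y ≤ f, the additivity relation π(x) + π(y) = π(x+y) holds. -/
theorem drlmBackward3Slope_additive_F1 (f b : ℝ) (hf0 : 0 < f) (hfb : f < b)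
    (hb : b ≤ (1 + f) / 4)
    (x y : ℝ) (hx0 : 0 ≤ x) (hxf : x ≤ f) (hy0 : 0 ≤ y) (hyf : y ≤ f)
    (hxy0 : 0 ≤ x + y) (hxyf : x + y ≤ f) :
    drlmBackward3Slope f b x + drlmBackward3Slope f b y
      = drlmBackward3Slope f b (x + y) := by
  have hf1 : f < 1 := by linarith
  have hfx : Int.fract x = x := Int.fract_eq_self.2 ⟨hx0, by linarith⟩
  have hfy : Int.fract y = y := Int.fract_eq_self.2 ⟨hy0, by linarith⟩
  have hfxy : Int.fract (x + y) = x + y := Int.fract_eq_self.2 ⟨hxy0, by linarith⟩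
  simp only [drlmBackward3Slope, hfx, hfy, hfxy, if_pos hxf, if_pos hyf, if_pos hxyf]
  field_simp
end

section
/- Let f and b be real numbers such that 0 < f < b ≤ (1+f)/4, and let π : ℝ → ℝ be the drlm_backward_3_slope function. Then for all x, y ∈ ℝ with f ≤ x ≤ b, 1+f−b ≤ y ≤ 1, and 1+f ≤ x + y ≤ 1+b, the additivity relation π(x) + π(y) = π(x+y) holds. -/
theorem drlmBackward3Slope_additive_F2 (f b : ℝ) (hf0 : 0 < f) (hfb : f < b)
    (hb : b ≤ (1 + f) / 4)
    (x y : ℝ) (hxl : f ≤ x) (hxu : x ≤ b)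
    (hyl : 1 + f - b ≤ y) (hyu : y ≤ 1)
    (hxyl : 1 + f ≤ x + y) (hxyu : x + y ≤ 1 + b) :
    drlmBackward3Slope f b x + drlmBackward3Slope f b y
      = drlmBackward3Slope f b (x + y) := by
  have hb1 : b < 1 := by linarith
  have hf1 : (0:ℝ) < 1 + f := by linarith
  have hfb' : f - b ≠ 0 := by intro h; nlinarith [h]
  have hfne : f ≠ 0 := ne_of_gt hf0
  have hf1ne : (1:ℝ) + f ≠ 0 := ne_of_gt hf1
  have hfx : Int.fract x = x := Int.fract_eq_self.2 ⟨by linarith, by linarith⟩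
  have h0 : Int.fract (x + y - 1) = x + y - 1 :=
    Int.fract_eq_self.2 ⟨by linarith, by linarith⟩
  have hfxy : Int.fract (x + y) = x + y - 1 := by
    rw [show x + y = (x + y - 1) + ((1:ℤ):ℝ) by push_cast; ring,
      Int.fract_add_intCast, h0]
    push_cast
    ring
  have hπx : drlmBackward3Slope f b x
      = 1 + (1 + f - b) * (x - f) / ((1 + f) * (f - b)) := by
    simp only [drlmBackward3Slope, hfx]
    by_cases hxf : x ≤ f
    · have hx : x = f := le_antisymm hxf hxl
      rw [if_pos hxf, hx]
      field_simp
      ring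
    · rw [if_neg hxf, if_pos hxu]
  have hπy : drlmBackward3Slope f b y
      = (1 + f - b) * (y - 1) / ((1 + f) * (f - b)) := by
    rcases eq_or_lt_of_le hyu with h1 | h1
    · have hfy : Int.fract y = 0 := by rw [h1]; norm_num [Int.fract]
      simp only [drlmBackward3Slope, hfy]
      rw [if_pos (le_of_lt hf0), h1]
      simp
    · have hfy : Int.fract y = y := Int.fract_eq_self.2 ⟨by linarith, h1⟩
      simp only [drlmBackward3Slope, hfy]
      have hyf : ¬ y ≤ f := by push_neg; linarith
      have hyb : ¬ y ≤ b := by push_neg; linarith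
      rw [if_neg hyf, if_neg hyb]
      by_cases h4 : y ≤ 1 + f - b
      · have hy : y = 1 + f - b := le_antisymm h4 hyl
        rw [if_pos h4, hy]
        field_simp
        ring
      · rw [if_neg h4]
  have hπxy : drlmBackward3Slope f b (x + y)
      = 1 + (1 + f - b) * (x + y - 1 - f) / ((1 + f) * (f - b)) := by
    simp only [drlmBackward3Slope, hfxy]
    by_cases h2 : x + y - 1 ≤ f
    · have hz : x + y - 1 = f := le_antisymm h2 (by linarith)
      rw [if_pos h2, hz]
      field_simp
      ring
    · rw [if_neg h2, if_pos (show x + y - 1 ≤ b by linarith)]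
  rw [hπx, hπy, hπxy]
  field_simp
  ring
end

section
/- Let f ∈ (0,1) and let (π_n) be a sequence of minimal valid functions with parameter f that converges pointwise to a function π : ℝ → ℝ. Then π is a minimal valid function with parameter f. -/
/-- Pointwise limits of minimal valid functions are minimal valid. -/
theorem minimalValid_of_pointwise_limit (f : ℝ) (hf0 : 0 < f) (hf1 : f < 1)
    (πseq : ℕ → ℝ → ℝ) (hmin : ∀ n, MinimalValid f (πseq n))
    (π : ℝ → ℝ)
    (hlim : ∀ x, Filter.Tendsto (fun n => πseq n x) Filter.atTop (nhds (π x))) :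
    MinimalValid f π := by
  refine ⟨fun x => ?_, ?_, fun x => ?_, fun x y => ?_, fun x => ?_⟩
  · exact ge_of_tendsto (hlim x) (Filter.Eventually.of_forall fun n => (hmin n).1 x)
  · have : Filter.Tendsto (fun n => πseq n 0) Filter.atTop (nhds 0) := by
      simpa [(hmin 0).2.1] using Filter.tendsto_congr
        (fun n => ((hmin n).2.1 : πseq n 0 = 0)) |>.mpr tendsto_const_nhds
    exact tendsto_nhds_unique (hlim 0) this
  · refine tendsto_nhds_unique (hlim (x + 1)) ?_
    exact Filter.Tendsto.congr (fun n => ((hmin n).2.2.1 x).symm) (hlim x)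
  · exact le_of_tendsto_of_tendsto' (hlim (x + y)) ((hlim x).add (hlim y))
      (fun n => (hmin n).2.2.2.1 x y)
  · refine tendsto_nhds_unique ((hlim x).add (hlim (f - x))) ?_
    exact Filter.Tendsto.congr (fun n => ((hmin n).2.2.2.2 x).symm) tendsto_const_nhds
end
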